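/- arXiv:2004.07306 — 6 statements merged into one kernel-verified Lean document; each statement's English description precedes it below -/
import Mathlib

section
/- The centralizer of Q in SU(2) equals {1, −1} (the identity matrix and its negative), and this set also equals the center of Q. In particular the centralizer of Q in SU(2) is contained in Q. -/
open Matrix Complex

noncomputable section

/-- The special unitary group over a star ring is a group (inverse = conjugate transpose). -/
instance grpSU {n : Type*} [DecidableEq n] [Fintype n] {α : Type*} [CommRing α] [StarRing α] :
    Group ↥(Matrix.specialUnitaryGroup n α) :=
  { (inferInstance : Monoid ↥(Matrix.specialUnitaryGroup n α)) with
    inv := fun A => ⟨star A.1, by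
      rw [Matrix.mem_specialUnitaryGroup_iff]
      refine ⟨Unitary.star_mem A.2.1, ?_⟩
      have hdet : A.1.det = 1 := A.2.2
      rw [Matrix.star_eq_conjTranspose, Matrix.det_conjTranspose, hdet, star_one]⟩
    inv_mul_cancel := fun A => Subtype.ext A.2.1.1 }

/-- `SU(2)`, the special unitary group of `2 × 2` complex matrices. -/
abbrev SU2 := Matrix.specialUnitaryGroup (Fin 2) ℂ

lemma mem_su2 (a b : ℂ) (h : a * (starRingEnd ℂ) a + b * (starRingEnd ℂ) b = 1) :
    !![a, b; -((starRingEnd ℂ) b), (starRingEnd ℂ) a] ∈ Matrix.specialUnitaryGroup (Fin 2) ℂ := by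
  rw [Matrix.mem_specialUnitaryGroup_iff]
  constructor
  · rw [Matrix.mem_unitaryGroup_iff]
    ext i j
    fin_cases i <;> fin_cases j <;>
      simp [Matrix.mul_apply, Fin.sum_univ_two, Matrix.star_eq_conjTranspose,
        Matrix.conjTranspose_apply, Matrix.one_apply] <;>
      first
      | ring1
      | linear_combination h
  · show Matrix.det _ = 1
    rw [Matrix.det_fin_two_of]
    linear_combination h

/-- The element `w = [[0,1],[-1,0]]` of `SU(2)`. -/
def w : SU2 := ⟨!![0, 1; -1, 0], by
  have h := mem_su2 0 1 (by norm_num)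
  simp only [map_zero, _root_.map_one] at h
  exact h⟩

/-- The element `j = [[I,0],[0,-I]]` of `SU(2)`. -/
def jmat : SU2 := ⟨!![Complex.I, 0; 0, -Complex.I], by
  have h := mem_su2 Complex.I 0 (by simp [Complex.conj_I, Complex.I_mul_I])
  simp only [map_zero, neg_zero, Complex.conj_I] at h
  exact h⟩

/-- The negative of the identity matrix, as an element of `SU(2)`. -/
def negOne : SU2 := ⟨!![-1, 0; 0, -1], by
  have h := mem_su2 (-1) 0 (by norm_num)
  simp only [map_zero, neg_zero, map_neg, _root_.map_one] at h
  exact h⟩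

/-- The quaternion subgroup `Q` of `SU(2)`, generated by `i = [[0,1],[-1,0]]` and
`j = [[I,0],[0,-I]]`. -/
def Q : Subgroup SU2 := Subgroup.closure {w, jmat}

lemma wQ : w ∈ Q := Subgroup.subset_closure (by simp)

lemma jQ : jmat ∈ Q := Subgroup.subset_closure (by simp)

lemma negOne_eq : negOne = w * w := by
  apply Subtype.ext
  show negOne.1 = w.1 * w.1
  ext i j
  fin_cases i <;> fin_cases j <;>
    simp [negOne, w, Matrix.mul_apply, Fin.sum_univ_two]

lemma negOne_comm (q : SU2) : q * negOne = negOne * q := by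
  apply Subtype.ext
  show q.1 * negOne.1 = negOne.1 * q.1
  have : negOne.1 = -(1 : Matrix (Fin 2) (Fin 2) ℂ) := by
    ext i j
    fin_cases i <;> fin_cases j <;> simp [negOne, Matrix.one_apply]
  rw [this]
  simp

lemma commute_imp (x : SU2) (hw : w * x = x * w) (hj : jmat * x = x * jmat) :
    x = 1 ∨ x = negOne := by
  have hw' : w.1 * x.1 = x.1 * w.1 := congrArg Subtype.val hw
  have hj' : jmat.1 * x.1 = x.1 * jmat.1 := congrArg Subtype.val hj
  have h2I : (2 * Complex.I) ≠ 0 := by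
    simp [Complex.I_ne_zero]
  have hb : x.1 0 1 = 0 := by
    have h := congrFun (congrFun hj' 0) 1
    simp [jmat, Matrix.mul_apply, Fin.sum_univ_two] at h
    have h2 : (2 * Complex.I) * x.1 0 1 = 0 := by linear_combination h
    rcases mul_eq_zero.1 h2 with h3 | h3
    · exact absurd h3 h2I
    · exact h3
  have hc : x.1 1 0 = 0 := by
    have h := congrFun (congrFun hj' 1) 0
    simp [jmat, Matrix.mul_apply, Fin.sum_univ_two] at h
    have h2 : (2 * Complex.I) * x.1 1 0 = 0 := by linear_combination -h
    rcases mul_eq_zero.1 h2 with h3 | h3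
    · exact absurd h3 h2I
    · exact h3
  have ha : x.1 1 1 = x.1 0 0 := by
    have h := congrFun (congrFun hw' 0) 1
    simpa [w, Matrix.mul_apply, Fin.sum_univ_two] using h
  have hdet : x.1.det = 1 := x.2.2
  rw [Matrix.det_fin_two] at hdet
  have hsq : (x.1 0 0 - 1) * (x.1 0 0 + 1) = 0 := by
    linear_combination hdet - x.1 0 0 * ha + x.1 1 0 * hb
  rcases mul_eq_zero.1 hsq with h1 | h1
  · left
    apply Subtype.ext
    show x.1 = 1
    have ha0 : x.1 0 0 = 1 := by linear_combination h1
    ext i j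
    fin_cases i <;> fin_cases j <;>
      simp [Matrix.one_apply, ha0, hb, hc, ha.trans ha0]
  · right
    apply Subtype.ext
    show x.1 = negOne.1
    have ha0 : x.1 0 0 = -1 := by linear_combination h1
    ext i j
    fin_cases i <;> fin_cases j <;>
      simp [negOne, ha0, hb, hc, ha.trans ha0]

/-- The centralizer of `Q` in `SU(2)` equals `{1, -1}`, which is also the center of `Q`;
in particular the centralizer of `Q` in `SU(2)` is contained in `Q`. -/
theorem centralizer_of_Q :
    ((Subgroup.centralizer (Q : Set SU2) : Set SU2) = {1, negOne}) ∧
    (({1, negOne} : Set SU2) = {x : SU2 | x ∈ Q ∧ ∀ q ∈ Q, q * x = x * q}) ∧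
    Subgroup.centralizer (Q : Set SU2) ≤ Q := by
  have negOneQ : negOne ∈ Q := negOne_eq ▸ Q.mul_mem wQ wQ
  have hcent : ∀ x : SU2, x ∈ Subgroup.centralizer (Q : Set SU2) ↔ (x = 1 ∨ x = negOne) := by
    intro x
    constructor
    · intro hx
      exact commute_imp x (Subgroup.mem_centralizer_iff.1 hx w wQ)
        (Subgroup.mem_centralizer_iff.1 hx jmat jQ)
    · rintro (rfl | rfl)
      · exact Subgroup.one_mem _
      · exact Subgroup.mem_centralizer_iff.2 fun g _ => negOne_comm g
  refine ⟨?_, ?_, ?_⟩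
  · ext x
    simpa [Set.mem_insert_iff] using hcent x
  · ext x
    simp only [Set.mem_insert_iff, Set.mem_singleton_iff, Set.mem_setOf_eq]
    constructor
    · rintro (rfl | rfl)
      · exact ⟨Q.one_mem, fun q _ => by rw [mul_one, one_mul]⟩
      · exact ⟨negOneQ, fun q _ => negOne_comm q⟩
    · rintro ⟨_, hcomm⟩
      exact commute_imp x (hcomm w wQ) (hcomm jmat jQ)
  · intro x hx
    rcases (hcent x).1 hx with rfl | rfl
    · exact Q.one_mem
    · exact negOneQ
end
end

section
/- Every abstract automorphism of Q is realized by conjugation in SU(2): for every group automorphism f of Q there exists a matrix A ∈ SU(2) such that A·q·A⁻¹ = f(q) for all q ∈ Q. -/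
open Matrix Complex

noncomputable section

/-! ### Auxiliary development: unit quaternions in `SU2` -/

lemma conj_aux (u v : ℝ) : (starRingEnd ℂ) ((u:ℂ) + v*I) = (u:ℂ) - v*I := by
  simp [map_add, _root_.map_mul, Complex.conj_ofReal, Complex.conj_I]
  ring

lemma conj_aux' (u v : ℝ) : (starRingEnd ℂ) ((u:ℂ) - v*I) = (u:ℂ) + v*I := by
  simp [map_sub, _root_.map_mul, Complex.conj_ofReal, Complex.conj_I]

/-- The unit quaternion `x + y i + z j + t k` as an element of `SU2`. -/
def quat (x y z t : ℝ) (h : x^2 + y^2 + z^2 + t^2 = 1) : SU2 :=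
  ⟨!![(x:ℂ) + z*I, (y:ℂ) - t*I; -((y:ℂ) + t*I), (x:ℂ) - z*I], by
    have hm := mem_su2 ((x:ℂ) + z*I) ((y:ℂ) - t*I) (by
      have hc : (x:ℂ)^2 + y^2 + z^2 + t^2 = 1 := by exact_mod_cast congrArg (Complex.ofReal) h
      rw [conj_aux x z, conj_aux' y t]
      linear_combination hc - ((z:ℂ)^2+(t:ℂ)^2) * Complex.I_sq)
    rw [conj_aux x z, conj_aux' y t] at hm
    exact hm⟩

lemma quat_ext {x y z t x' y' z' t' : ℝ} {h h'} (hx : x = x') (hy : y = y')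
    (hz : z = z') (ht : t = t') : quat x y z t h = quat x' y' z' t' h' := by
  subst hx; subst hy; subst hz; subst ht; rfl

lemma quat_inj {x y z t x' y' z' t' : ℝ} {h h'} :
    quat x y z t h = quat x' y' z' t' h' ↔ x = x' ∧ y = y' ∧ z = z' ∧ t = t' := by
  constructor
  · intro he
    have hv := congrArg Subtype.val he
    have h00 := congrFun (congrFun hv 0) 0
    have h01 := congrFun (congrFun hv 0) 1
    simp [quat, Complex.ext_iff] at h00 h01
    exact ⟨by linarith [h00.1], by linarith [h01.1], by linarith [h00.2], by linarith [h01.2]⟩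
  · rintro ⟨rfl, rfl, rfl, rfl⟩; rfl

lemma quat_mul {x1 y1 z1 t1 x2 y2 z2 t2 : ℝ} (h1 : x1^2+y1^2+z1^2+t1^2 = 1)
    (h2 : x2^2+y2^2+z2^2+t2^2 = 1) :
    quat x1 y1 z1 t1 h1 * quat x2 y2 z2 t2 h2 =
      quat (x1*x2 - y1*y2 - z1*z2 - t1*t2) (x1*y2 + y1*x2 + z1*t2 - t1*z2)
        (x1*z2 - y1*t2 + z1*x2 + t1*y2) (x1*t2 + y1*z2 - z1*y2 + t1*x2)
        (by nlinarith [h1, h2]) := by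
  apply Subtype.ext
  show (quat x1 y1 z1 t1 h1).1 * (quat x2 y2 z2 t2 h2).1 = _
  ext i jj
  fin_cases i <;> fin_cases jj <;>
    simp [quat, Matrix.mul_apply, Fin.sum_univ_two, Complex.ext_iff] <;>
    constructor <;> first
      | trivial
      | (push_cast; ring)

lemma one_quat : (1 : SU2) = quat 1 0 0 0 (by norm_num) := by
  apply Subtype.ext
  ext i jj
  fin_cases i <;> fin_cases jj <;> simp [quat, Matrix.one_apply]

lemma quat_inv {x y z t : ℝ} (h : x^2+y^2+z^2+t^2 = 1) :
    (quat x y z t h)⁻¹ = quat x (-y) (-z) (-t) (by linear_combination h) := by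
  apply inv_eq_of_mul_eq_one_right
  rw [quat_mul, one_quat]
  exact quat_ext (by linear_combination h) (by ring) (by ring) (by ring)

def P1 : SU2 := quat 1 0 0 0 (by norm_num)
def N1 : SU2 := quat (-1) 0 0 0 (by norm_num)
def PW : SU2 := quat 0 1 0 0 (by norm_num)
def NW : SU2 := quat 0 (-1) 0 0 (by norm_num)
def PJ : SU2 := quat 0 0 1 0 (by norm_num)
def NJ : SU2 := quat 0 0 (-1) 0 (by norm_num)
def PK : SU2 := quat 0 0 0 1 (by norm_num)
def NK : SU2 := quat 0 0 0 (-1) (by norm_num)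

lemma w_eq : w = PW := by
  apply Subtype.ext
  ext i jj
  fin_cases i <;> fin_cases jj <;> simp [w, PW, quat]

lemma j_eq : jmat = PJ := by
  apply Subtype.ext
  ext i jj
  fin_cases i <;> fin_cases jj <;> simp [jmat, PJ, quat]

lemma Q_cases {g : SU2} (hg : g ∈ Q) :
    g = P1 ∨ g = N1 ∨ g = PW ∨ g = NW ∨ g = PJ ∨ g = NJ ∨ g = PK ∨ g = NK := by
  have hg' : g ∈ Subgroup.closure {w, jmat} := hg
  clear hg
  induction hg' using Subgroup.closure_induction with
  | mem x hx =>
    rcases hx with rfl | hx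
    · right; right; left; exact w_eq
    · rw [Set.mem_singleton_iff] at hx
      subst hx
      right; right; right; right; left; exact j_eq
  | one => left; exact one_quat
  | mul x y hx hy ihx ihy =>
    rcases ihx with rfl|rfl|rfl|rfl|rfl|rfl|rfl|rfl <;>
      rcases ihy with rfl|rfl|rfl|rfl|rfl|rfl|rfl|rfl <;>
      norm_num [P1, N1, PW, NW, PJ, NJ, PK, NK, quat_mul, quat_inj]
  | inv x hx ihx =>
    rcases ihx with rfl|rfl|rfl|rfl|rfl|rfl|rfl|rfl <;>
      norm_num [P1, N1, PW, NW, PJ, NJ, PK, NK, quat_inv, quat_inj]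

def wQ_s8 : ↥Q := ⟨w, Subgroup.subset_closure (Set.mem_insert _ _)⟩
def jQ_s8 : ↥Q := ⟨jmat, Subgroup.subset_closure (Set.mem_insert_of_mem _ rfl)⟩

lemma contra_one (f : ↥Q ≃* ↥Q) (a b : ↥Q) (h : (↑(f a) : SU2) * ↑(f b) = 1) :
    (↑a : SU2) * ↑b = 1 := by
  have h1 : f (a * b) = 1 := by
    rw [_root_.map_mul]
    apply Subtype.ext
    exact h
  have h2 : a * b = 1 := f.injective (by rw [h1, _root_.map_one])
  exact congrArg Subtype.val h2

lemma conj_realize (f : ↥Q ≃* ↥Q) (A : SU2)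
    (hw : A * w = (↑(f wQ_s8) : SU2) * A) (hj : A * jmat = (↑(f jQ_s8) : SU2) * A) :
    ∀ q : ↥Q, A * (q : SU2) * A⁻¹ = ((f q : ↥Q) : SU2) := by
  suffices h : ∀ x (hx : x ∈ Subgroup.closure {w, jmat}),
      A * x * A⁻¹ = ((f ⟨x, hx⟩ : ↥Q) : SU2) by
    intro q; exact h q.1 q.2
  intro x hx
  induction hx using Subgroup.closure_induction with
  | mem x hx =>
    rcases hx with rfl | hx
    · show A * w * A⁻¹ = (↑(f wQ_s8) : SU2)
      rw [hw, mul_assoc, mul_inv_cancel, mul_one]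
    · rw [Set.mem_singleton_iff] at hx
      subst hx
      show A * jmat * A⁻¹ = (↑(f jQ_s8) : SU2)
      rw [hj, mul_assoc, mul_inv_cancel, mul_one]
  | one =>
    show A * 1 * A⁻¹ = (↑(f 1) : SU2)
    rw [_root_.map_one, mul_one, mul_inv_cancel]
    rfl
  | mul x y hx hy ihx ihy =>
    show A * (x * y) * A⁻¹ = (↑(f (⟨x, hx⟩ * ⟨y, hy⟩)) : SU2)
    rw [_root_.map_mul]
    calc A * (x * y) * A⁻¹ = (A * x * A⁻¹) * (A * y * A⁻¹) := by group
    _ = (↑(f ⟨x, hx⟩) : SU2) * (↑(f ⟨y, hy⟩) : SU2) := by rw [ihx, ihy]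
    _ = _ := rfl
  | inv x hx ihx =>
    show A * x⁻¹ * A⁻¹ = (↑(f (⟨x, hx⟩⁻¹)) : SU2)
    rw [_root_.map_inv]
    calc A * x⁻¹ * A⁻¹ = (A * x * A⁻¹)⁻¹ := by group
    _ = ((↑(f ⟨x, hx⟩) : SU2))⁻¹ := by rw [ihx]
    _ = _ := rfl

def r : ℝ := Real.sqrt 2 / 2

lemma r_sq : r ^ 2 = 1 / 2 := by
  rw [r, div_pow, Real.sq_sqrt (by norm_num : (0:ℝ) ≤ 2)]
  norm_num

lemma wQ_sq_ne : (↑wQ_s8 : SU2) * ↑wQ_s8 ≠ 1 := by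
  show w * w ≠ 1
  rw [w_eq, PW, quat_mul, one_quat, Ne, quat_inj]
  norm_num

lemma jQ_sq_ne : (↑jQ_s8 : SU2) * ↑jQ_s8 ≠ 1 := by
  show jmat * jmat ≠ 1
  rw [j_eq, PJ, quat_mul, one_quat, Ne, quat_inj]
  norm_num

lemma wj_ne : (↑wQ_s8 : SU2) * ↑jQ_s8 ≠ 1 := by
  show w * jmat ≠ 1
  rw [w_eq, j_eq, PW, PJ, quat_mul, one_quat, Ne, quat_inj]
  norm_num

lemma j_ne_w : jmat ≠ w := by
  rw [w_eq, j_eq, Ne, PW, PJ, quat_inj]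
  norm_num

set_option maxHeartbeats 4000000 in
/-- Every abstract automorphism of `Q` is realized by conjugation in `SU(2)`. -/
theorem aut_Q_realized_by_conjugation :
    ∀ f : ↥Q ≃* ↥Q, ∃ A : SU2, ∀ q : ↥Q,
      A * (q : SU2) * A⁻¹ = ((f q : ↥Q) : SU2) := by
  intro f
  rcases Q_cases (f wQ_s8).2 with hy|hy|hy|hy|hy|hy|hy|hy
  · exact absurd (contra_one f wQ_s8 wQ_s8 (by
      rw [hy, one_quat]
      simp only [P1, quat_mul, quat_inj]
      norm_num)) wQ_sq_ne
  · exact absurd (contra_one f wQ_s8 wQ_s8 (by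
      rw [hy, one_quat]
      simp only [N1, quat_mul, quat_inj]
      norm_num)) wQ_sq_ne
  · rcases Q_cases (f jQ_s8).2 with hz|hz|hz|hz|hz|hz|hz|hz
    · exact absurd (contra_one f jQ_s8 jQ_s8 (by
        rw [hz, one_quat]
        simp only [P1, quat_mul, quat_inj]
        norm_num)) jQ_sq_ne
    · exact absurd (contra_one f jQ_s8 jQ_s8 (by
        rw [hz, one_quat]
        simp only [N1, quat_mul, quat_inj]
        norm_num)) jQ_sq_ne
    · exact absurd (congrArg Subtype.val (f.injective (Subtype.ext (hz.trans hy.symm)))) j_ne_w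
    · exact absurd (contra_one f wQ_s8 jQ_s8 (by
        rw [hy, hz, one_quat]
        simp only [PW, NW, quat_mul, quat_inj]
        norm_num)) wj_ne
    · refine ⟨quat 1 0 0 0 (by norm_num [r_sq]), conj_realize f _ ?_ ?_⟩
      · rw [hy, w_eq]
        simp only [PW, NW, PJ, NJ, PK, NK, quat_mul, quat_inj]
        try norm_num
      · rw [hz, j_eq]
        simp only [PW, NW, PJ, NJ, PK, NK, quat_mul, quat_inj]
        try norm_num
    · refine ⟨quat 0 1 0 0 (by norm_num [r_sq]), conj_realize f _ ?_ ?_⟩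
      · rw [hy, w_eq]
        simp only [PW, NW, PJ, NJ, PK, NK, quat_mul, quat_inj]
        try norm_num
      · rw [hz, j_eq]
        simp only [PW, NW, PJ, NJ, PK, NK, quat_mul, quat_inj]
        try norm_num
    · refine ⟨quat r r 0 0 (by norm_num [r_sq]), conj_realize f _ ?_ ?_⟩
      · rw [hy, w_eq]
        simp only [PW, NW, PJ, NJ, PK, NK, quat_mul, quat_inj]
        try norm_num
      · rw [hz, j_eq]
        simp only [PW, NW, PJ, NJ, PK, NK, quat_mul, quat_inj]
        try norm_num
    · refine ⟨quat r (-r) 0 0 (by norm_num [r_sq]), conj_realize f _ ?_ ?_⟩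
      · rw [hy, w_eq]
        simp only [PW, NW, PJ, NJ, PK, NK, quat_mul, quat_inj]
        try norm_num
      · rw [hz, j_eq]
        simp only [PW, NW, PJ, NJ, PK, NK, quat_mul, quat_inj]
        try norm_num
  · rcases Q_cases (f jQ_s8).2 with hz|hz|hz|hz|hz|hz|hz|hz
    · exact absurd (contra_one f jQ_s8 jQ_s8 (by
        rw [hz, one_quat]
        simp only [P1, quat_mul, quat_inj]
        norm_num)) jQ_sq_ne
    · exact absurd (contra_one f jQ_s8 jQ_s8 (by
        rw [hz, one_quat]
        simp only [N1, quat_mul, quat_inj]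
        norm_num)) jQ_sq_ne
    · exact absurd (contra_one f wQ_s8 jQ_s8 (by
        rw [hy, hz, one_quat]
        simp only [NW, PW, quat_mul, quat_inj]
        norm_num)) wj_ne
    · exact absurd (congrArg Subtype.val (f.injective (Subtype.ext (hz.trans hy.symm)))) j_ne_w
    · refine ⟨quat 0 0 1 0 (by norm_num [r_sq]), conj_realize f _ ?_ ?_⟩
      · rw [hy, w_eq]
        simp only [PW, NW, PJ, NJ, PK, NK, quat_mul, quat_inj]
        try norm_num
      · rw [hz, j_eq]
        simp only [PW, NW, PJ, NJ, PK, NK, quat_mul, quat_inj]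
        try norm_num
    · refine ⟨quat 0 0 0 1 (by norm_num [r_sq]), conj_realize f _ ?_ ?_⟩
      · rw [hy, w_eq]
        simp only [PW, NW, PJ, NJ, PK, NK, quat_mul, quat_inj]
        try norm_num
      · rw [hz, j_eq]
        simp only [PW, NW, PJ, NJ, PK, NK, quat_mul, quat_inj]
        try norm_num
    · refine ⟨quat 0 0 r r (by norm_num [r_sq]), conj_realize f _ ?_ ?_⟩
      · rw [hy, w_eq]
        simp only [PW, NW, PJ, NJ, PK, NK, quat_mul, quat_inj]
        try norm_num
      · rw [hz, j_eq]
        simp only [PW, NW, PJ, NJ, PK, NK, quat_mul, quat_inj]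
        try norm_num
    · refine ⟨quat 0 0 r (-r) (by norm_num [r_sq]), conj_realize f _ ?_ ?_⟩
      · rw [hy, w_eq]
        simp only [PW, NW, PJ, NJ, PK, NK, quat_mul, quat_inj]
        try norm_num
      · rw [hz, j_eq]
        simp only [PW, NW, PJ, NJ, PK, NK, quat_mul, quat_inj]
        try norm_num
  · rcases Q_cases (f jQ_s8).2 with hz|hz|hz|hz|hz|hz|hz|hz
    · exact absurd (contra_one f jQ_s8 jQ_s8 (by
        rw [hz, one_quat]
        simp only [P1, quat_mul, quat_inj]
        norm_num)) jQ_sq_ne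
    · exact absurd (contra_one f jQ_s8 jQ_s8 (by
        rw [hz, one_quat]
        simp only [N1, quat_mul, quat_inj]
        norm_num)) jQ_sq_ne
    · refine ⟨quat 0 r r 0 (by norm_num [r_sq]), conj_realize f _ ?_ ?_⟩
      · rw [hy, w_eq]
        simp only [PW, NW, PJ, NJ, PK, NK, quat_mul, quat_inj]
        try norm_num
      · rw [hz, j_eq]
        simp only [PW, NW, PJ, NJ, PK, NK, quat_mul, quat_inj]
        try norm_num
    · refine ⟨quat r 0 0 r (by norm_num [r_sq]), conj_realize f _ ?_ ?_⟩
      · rw [hy, w_eq]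
        simp only [PW, NW, PJ, NJ, PK, NK, quat_mul, quat_inj]
        try norm_num
      · rw [hz, j_eq]
        simp only [PW, NW, PJ, NJ, PK, NK, quat_mul, quat_inj]
        try norm_num
    · exact absurd (congrArg Subtype.val (f.injective (Subtype.ext (hz.trans hy.symm)))) j_ne_w
    · exact absurd (contra_one f wQ_s8 jQ_s8 (by
        rw [hy, hz, one_quat]
        simp only [PJ, NJ, quat_mul, quat_inj]
        norm_num)) wj_ne
    · refine ⟨quat (1/2) (1/2) (1/2) (1/2) (by norm_num [r_sq]), conj_realize f _ ?_ ?_⟩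
      · rw [hy, w_eq]
        simp only [PW, NW, PJ, NJ, PK, NK, quat_mul, quat_inj]
        try norm_num
      · rw [hz, j_eq]
        simp only [PW, NW, PJ, NJ, PK, NK, quat_mul, quat_inj]
        try norm_num
    · refine ⟨quat (1/2) (-1/2) (-1/2) (1/2) (by norm_num [r_sq]), conj_realize f _ ?_ ?_⟩
      · rw [hy, w_eq]
        simp only [PW, NW, PJ, NJ, PK, NK, quat_mul, quat_inj]
        try norm_num
      · rw [hz, j_eq]
        simp only [PW, NW, PJ, NJ, PK, NK, quat_mul, quat_inj]
        try norm_num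
  · rcases Q_cases (f jQ_s8).2 with hz|hz|hz|hz|hz|hz|hz|hz
    · exact absurd (contra_one f jQ_s8 jQ_s8 (by
        rw [hz, one_quat]
        simp only [P1, quat_mul, quat_inj]
        norm_num)) jQ_sq_ne
    · exact absurd (contra_one f jQ_s8 jQ_s8 (by
        rw [hz, one_quat]
        simp only [N1, quat_mul, quat_inj]
        norm_num)) jQ_sq_ne
    · refine ⟨quat r 0 0 (-r) (by norm_num [r_sq]), conj_realize f _ ?_ ?_⟩
      · rw [hy, w_eq]
        simp only [PW, NW, PJ, NJ, PK, NK, quat_mul, quat_inj]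
        try norm_num
      · rw [hz, j_eq]
        simp only [PW, NW, PJ, NJ, PK, NK, quat_mul, quat_inj]
        try norm_num
    · refine ⟨quat 0 r (-r) 0 (by norm_num [r_sq]), conj_realize f _ ?_ ?_⟩
      · rw [hy, w_eq]
        simp only [PW, NW, PJ, NJ, PK, NK, quat_mul, quat_inj]
        try norm_num
      · rw [hz, j_eq]
        simp only [PW, NW, PJ, NJ, PK, NK, quat_mul, quat_inj]
        try norm_num
    · exact absurd (contra_one f wQ_s8 jQ_s8 (by
        rw [hy, hz, one_quat]
        simp only [NJ, PJ, quat_mul, quat_inj]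
        norm_num)) wj_ne
    · exact absurd (congrArg Subtype.val (f.injective (Subtype.ext (hz.trans hy.symm)))) j_ne_w
    · refine ⟨quat (1/2) (1/2) (-1/2) (-1/2) (by norm_num [r_sq]), conj_realize f _ ?_ ?_⟩
      · rw [hy, w_eq]
        simp only [PW, NW, PJ, NJ, PK, NK, quat_mul, quat_inj]
        try norm_num
      · rw [hz, j_eq]
        simp only [PW, NW, PJ, NJ, PK, NK, quat_mul, quat_inj]
        try norm_num
    · refine ⟨quat (1/2) (-1/2) (1/2) (-1/2) (by norm_num [r_sq]), conj_realize f _ ?_ ?_⟩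
      · rw [hy, w_eq]
        simp only [PW, NW, PJ, NJ, PK, NK, quat_mul, quat_inj]
        try norm_num
      · rw [hz, j_eq]
        simp only [PW, NW, PJ, NJ, PK, NK, quat_mul, quat_inj]
        try norm_num
  · rcases Q_cases (f jQ_s8).2 with hz|hz|hz|hz|hz|hz|hz|hz
    · exact absurd (contra_one f jQ_s8 jQ_s8 (by
        rw [hz, one_quat]
        simp only [P1, quat_mul, quat_inj]
        norm_num)) jQ_sq_ne
    · exact absurd (contra_one f jQ_s8 jQ_s8 (by
        rw [hz, one_quat]
        simp only [N1, quat_mul, quat_inj]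
        norm_num)) jQ_sq_ne
    · refine ⟨quat (1/2) (-1/2) (-1/2) (-1/2) (by norm_num [r_sq]), conj_realize f _ ?_ ?_⟩
      · rw [hy, w_eq]
        simp only [PW, NW, PJ, NJ, PK, NK, quat_mul, quat_inj]
        try norm_num
      · rw [hz, j_eq]
        simp only [PW, NW, PJ, NJ, PK, NK, quat_mul, quat_inj]
        try norm_num
    · refine ⟨quat (1/2) (1/2) (-1/2) (1/2) (by norm_num [r_sq]), conj_realize f _ ?_ ?_⟩
      · rw [hy, w_eq]
        simp only [PW, NW, PJ, NJ, PK, NK, quat_mul, quat_inj]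
        try norm_num
      · rw [hz, j_eq]
        simp only [PW, NW, PJ, NJ, PK, NK, quat_mul, quat_inj]
        try norm_num
    · refine ⟨quat r 0 (-r) 0 (by norm_num [r_sq]), conj_realize f _ ?_ ?_⟩
      · rw [hy, w_eq]
        simp only [PW, NW, PJ, NJ, PK, NK, quat_mul, quat_inj]
        try norm_num
      · rw [hz, j_eq]
        simp only [PW, NW, PJ, NJ, PK, NK, quat_mul, quat_inj]
        try norm_num
    · refine ⟨quat 0 r 0 r (by norm_num [r_sq]), conj_realize f _ ?_ ?_⟩
      · rw [hy, w_eq]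
        simp only [PW, NW, PJ, NJ, PK, NK, quat_mul, quat_inj]
        try norm_num
      · rw [hz, j_eq]
        simp only [PW, NW, PJ, NJ, PK, NK, quat_mul, quat_inj]
        try norm_num
    · exact absurd (congrArg Subtype.val (f.injective (Subtype.ext (hz.trans hy.symm)))) j_ne_w
    · exact absurd (contra_one f wQ_s8 jQ_s8 (by
        rw [hy, hz, one_quat]
        simp only [PK, NK, quat_mul, quat_inj]
        norm_num)) wj_ne
  · rcases Q_cases (f jQ_s8).2 with hz|hz|hz|hz|hz|hz|hz|hz
    · exact absurd (contra_one f jQ_s8 jQ_s8 (by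
        rw [hz, one_quat]
        simp only [P1, quat_mul, quat_inj]
        norm_num)) jQ_sq_ne
    · exact absurd (contra_one f jQ_s8 jQ_s8 (by
        rw [hz, one_quat]
        simp only [N1, quat_mul, quat_inj]
        norm_num)) jQ_sq_ne
    · refine ⟨quat (1/2) (1/2) (1/2) (-1/2) (by norm_num [r_sq]), conj_realize f _ ?_ ?_⟩
      · rw [hy, w_eq]
        simp only [PW, NW, PJ, NJ, PK, NK, quat_mul, quat_inj]
        try norm_num
      · rw [hz, j_eq]
        simp only [PW, NW, PJ, NJ, PK, NK, quat_mul, quat_inj]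
        try norm_num
    · refine ⟨quat (1/2) (-1/2) (1/2) (1/2) (by norm_num [r_sq]), conj_realize f _ ?_ ?_⟩
      · rw [hy, w_eq]
        simp only [PW, NW, PJ, NJ, PK, NK, quat_mul, quat_inj]
        try norm_num
      · rw [hz, j_eq]
        simp only [PW, NW, PJ, NJ, PK, NK, quat_mul, quat_inj]
        try norm_num
    · refine ⟨quat r 0 r 0 (by norm_num [r_sq]), conj_realize f _ ?_ ?_⟩
      · rw [hy, w_eq]
        simp only [PW, NW, PJ, NJ, PK, NK, quat_mul, quat_inj]
        try norm_num
      · rw [hz, j_eq]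
        simp only [PW, NW, PJ, NJ, PK, NK, quat_mul, quat_inj]
        try norm_num
    · refine ⟨quat 0 r 0 (-r) (by norm_num [r_sq]), conj_realize f _ ?_ ?_⟩
      · rw [hy, w_eq]
        simp only [PW, NW, PJ, NJ, PK, NK, quat_mul, quat_inj]
        try norm_num
      · rw [hz, j_eq]
        simp only [PW, NW, PJ, NJ, PK, NK, quat_mul, quat_inj]
        try norm_num
    · exact absurd (contra_one f wQ_s8 jQ_s8 (by
        rw [hy, hz, one_quat]
        simp only [NK, PK, quat_mul, quat_inj]
        norm_num)) wj_ne
    · exact absurd (congrArg Subtype.val (f.injective (Subtype.ext (hz.trans hy.symm)))) j_ne_w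
end
end

section
/- The normalizer of Q in SU(2) is a finite group of order 48 (it is the binary octahedral group). -/
open Matrix Complex

noncomputable section

namespace BO

local notation "conj'" => (starRingEnd ℂ)

noncomputable def P (a b : ℂ) : Matrix (Fin 2) (Fin 2) ℂ :=
  !![a, b; -conj' b, conj' a]

lemma P_mul (a b c d : ℂ) :
    P a b * P c d = P (a * c - b * conj' d) (a * d + b * conj' c) := by
  ext i j
  fin_cases i <;> fin_cases j <;>
    simp [P, Matrix.mul_apply, Fin.sum_univ_two, _root_.map_mul, map_add, map_sub] <;> ring

lemma P_star (a b : ℂ) : star (P a b) = P (conj' a) (-b) := by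
  ext i j
  fin_cases i <;> fin_cases j <;>
    simp [P, Matrix.star_eq_conjTranspose, Matrix.conjTranspose_apply]

lemma P_inj {a b c d : ℂ} (h : P a b = P c d) : a = c ∧ b = d := by
  constructor
  · have := congrFun (congrFun h 0) 0; simpa [P] using this
  · have := congrFun (congrFun h 0) 1; simpa [P] using this

/-- Every element of SU(2) has the standard form. -/
lemma su2_form (g : SU2) :
    g.1 = P (g.1 0 0) (g.1 0 1) ∧
      g.1 0 0 * conj' (g.1 0 0) + g.1 0 1 * conj' (g.1 0 1) = 1 := by
  obtain ⟨hu, hd⟩ := Matrix.mem_specialUnitaryGroup_iff.mp g.2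
  rw [Matrix.mem_unitaryGroup_iff] at hu
  have h00 := congrFun (congrFun hu 0) 0
  have h10 := congrFun (congrFun hu 1) 0
  simp [Matrix.mul_apply, Fin.sum_univ_two, Matrix.star_eq_conjTranspose,
    Matrix.conjTranspose_apply, Matrix.one_apply] at h00 h10
  rw [Matrix.det_fin_two] at hd
  have hda : g.1 1 1 = conj' (g.1 0 0) := by
    linear_combination (conj' (g.1 0 0)) * hd + g.1 0 1 * h10 - g.1 1 1 * h00
  have hcb : g.1 1 0 = -conj' (g.1 0 1) := by
    linear_combination (-conj' (g.1 0 1)) * hd + g.1 0 0 * h10 - g.1 1 0 * h00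
  refine ⟨?_, h00⟩
  ext i j
  fin_cases i <;> fin_cases j <;> simp [P, hcb, hda]

end BO
namespace BO2
open BO

local notation "conj'" => (starRingEnd ℂ)

/-- first entry -/
noncomputable def A (g : SU2) : ℂ := g.1 0 0
/-- second entry -/
noncomputable def B (g : SU2) : ℂ := g.1 0 1

lemma coe_eq_P (g : SU2) : g.1 = P (A g) (B g) := (su2_form g).1

lemma norm_AB (g : SU2) : A g * conj' (A g) + B g * conj' (B g) = 1 := (su2_form g).2

lemma coe_mul (g h : SU2) : ((g * h : SU2) : Matrix (Fin 2) (Fin 2) ℂ) = g.1 * h.1 := rfl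

lemma coe_inv (g : SU2) : ((g⁻¹ : SU2) : Matrix (Fin 2) (Fin 2) ℂ) = star g.1 := rfl

lemma mul_eq_P (g h : SU2) :
    ((g * h : SU2) : Matrix (Fin 2) (Fin 2) ℂ) =
      P (A g * A h - B g * conj' (B h)) (A g * B h + B g * conj' (A h)) := by
  rw [coe_mul, coe_eq_P g, coe_eq_P h, P_mul]

lemma inv_eq_P (g : SU2) :
    ((g⁻¹ : SU2) : Matrix (Fin 2) (Fin 2) ℂ) = P (conj' (A g)) (-B g) := by
  rw [coe_inv, coe_eq_P g, P_star]

lemma A_P {g : SU2} {x y : ℂ} (h : g.1 = P x y) : A g = x ∧ B g = y :=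
  P_inj ((coe_eq_P g).symm.trans h)

lemma A_mul (g h : SU2) : A (g * h) = A g * A h - B g * conj' (B h) :=
  (A_P (mul_eq_P g h)).1

lemma B_mul (g h : SU2) : B (g * h) = A g * B h + B g * conj' (A h) :=
  (A_P (mul_eq_P g h)).2

lemma A_inv (g : SU2) : A g⁻¹ = conj' (A g) := (A_P (inv_eq_P g)).1
lemma B_inv (g : SU2) : B g⁻¹ = -B g := (A_P (inv_eq_P g)).2

lemma A_one : A 1 = 1 := rfl
lemma B_one : B 1 = 0 := rfl
lemma A_w : A w = 0 := rfl
lemma B_w : B w = 1 := rfl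
lemma A_j : A jmat = Complex.I := rfl
lemma B_j : B jmat = 0 := rfl

lemma ext_AB {g h : SU2} (h1 : A g = A h) (h2 : B g = B h) : g = h := by
  apply Subtype.ext
  rw [coe_eq_P g, coe_eq_P h, h1, h2]

/-- the carrier predicate for Q -/
def QP (a b : ℂ) : Prop := (b = 0 ∧ a ^ 4 = 1) ∨ (a = 0 ∧ b ^ 4 = 1)

/-- the explicit subgroup equal to Q -/
noncomputable def QH : Subgroup SU2 where
  carrier := {g | QP (A g) (B g)}
  one_mem' := by left; exact ⟨B_one, by rw [A_one]; norm_num⟩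
  mul_mem' := by
    rintro g h (⟨hb, ha⟩ | ⟨ha, hb⟩) (⟨hd, hc⟩ | ⟨hc, hd⟩)
    · exact Or.inl ⟨by simp [B_mul, hb, hd], by simp [A_mul, hb, hd, mul_pow, ha, hc]⟩
    · exact Or.inr ⟨by simp [A_mul, hb, hc], by simp [B_mul, hb, hc, mul_pow, ha, hd]⟩
    · exact Or.inr ⟨by simp [A_mul, ha, hd], by simp [B_mul, ha, hd, mul_pow, hb, ← map_pow, hc]⟩
    · exact Or.inl ⟨by simp [B_mul, ha, hc], by
        rw [A_mul, ha, hc, show (0 * 0 - B g * (starRingEnd ℂ) (B h)) ^ 4 = B g ^ 4 * (starRingEnd ℂ) (B h ^ 4) from by rw [map_pow]; ring, hb, hd]; simp⟩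
  inv_mem' := by
    rintro g (⟨hb, ha⟩ | ⟨ha, hb⟩)
    · exact Or.inl ⟨by simp [B_inv, hb], by simp [A_inv, ← map_pow, ha]⟩
    · exact Or.inr ⟨by simp [A_inv, ha], by rw [B_inv, show (-B g) ^ 4 = B g ^ 4 from by ring, hb]⟩

end BO2
namespace BO2
open BO Complex

local notation "conj'" => (starRingEnd ℂ)

lemma quartic_roots {x : ℂ} (h : x ^ 4 = 1) :
    x = 1 ∨ x = -1 ∨ x = Complex.I ∨ x = -Complex.I := by
  have h2 : (x - 1) * (x + 1) * (x - Complex.I) * (x + Complex.I) = 0 := by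
    have hI : Complex.I ^ 2 = -1 := Complex.I_sq
    linear_combination h + (1 - x ^ 2) * hI
  rcases mul_eq_zero.1 h2 with h3 | h3
  · rcases mul_eq_zero.1 h3 with h4 | h4
    · rcases mul_eq_zero.1 h4 with h5 | h5
      · exact Or.inl (sub_eq_zero.1 h5)
      · exact Or.inr (Or.inl (by linear_combination h5))
    · exact Or.inr (Or.inr (Or.inl (sub_eq_zero.1 h4)))
  · exact Or.inr (Or.inr (Or.inr (by linear_combination h3)))

lemma w_mem_Q : w ∈ Q := Subgroup.subset_closure (by simp)
lemma j_mem_Q : jmat ∈ Q := Subgroup.subset_closure (by simp)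

lemma mem_Q_of_QP {g : SU2} (h : QP (A g) (B g)) : g ∈ Q := by
  have hw := w_mem_Q; have hj := j_mem_Q
  rcases h with ⟨hb, ha⟩ | ⟨ha, hb⟩
  · rcases quartic_roots ha with h | h | h | h
    · have : g = 1 := ext_AB (by rw [h, A_one]) (by rw [hb, B_one])
      rw [this]; exact one_mem Q
    · have : g = w * w := ext_AB (by simp [A_mul, A_w, B_w, h]) (by simp [B_mul, A_w, B_w, hb])
      rw [this]; exact mul_mem hw hw
    · have : g = jmat := ext_AB (by rw [h, A_j]) (by rw [hb, B_j])
      rw [this]; exact hj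
    · have : g = w * w * jmat := ext_AB
        (by simp [A_mul, B_mul, A_w, B_w, A_j, B_j, h])
        (by simp [A_mul, B_mul, A_w, B_w, A_j, B_j, hb])
      rw [this]; exact mul_mem (mul_mem hw hw) hj
  · rcases quartic_roots hb with h | h | h | h
    · have : g = w := ext_AB (by rw [ha, A_w]) (by rw [h, B_w])
      rw [this]; exact hw
    · have : g = w * w * w := ext_AB
        (by simp [A_mul, B_mul, A_w, B_w, ha])
        (by simp [A_mul, B_mul, A_w, B_w, h])
      rw [this]; exact mul_mem (mul_mem hw hw) hw
    · have : g = jmat * w := ext_AB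
        (by simp [A_mul, B_mul, A_w, B_w, A_j, B_j, ha])
        (by simp [A_mul, B_mul, A_w, B_w, A_j, B_j, h])
      rw [this]; exact mul_mem hj hw
    · have : g = w * w * jmat * w := ext_AB
        (by simp [A_mul, B_mul, A_w, B_w, A_j, B_j, ha])
        (by simp [A_mul, B_mul, A_w, B_w, A_j, B_j, h])
      rw [this]; exact mul_mem (mul_mem (mul_mem hw hw) hj) hw

lemma Q_eq_QH : Q = QH := by
  apply le_antisymm
  · rw [Q, Subgroup.closure_le]
    rintro g (rfl | rfl)
    · exact Or.inr ⟨A_w, by rw [B_w]; norm_num⟩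
    · exact Or.inl ⟨B_j, by rw [A_j]; simp [pow_succ, Complex.I_mul_I]⟩
  · exact fun g hg => mem_Q_of_QP hg

lemma mem_Q_iff {g : SU2} : g ∈ Q ↔ QP (A g) (B g) := by
  rw [Q_eq_QH]; rfl

end BO2
namespace BO2
open BO Complex

local notation "conj'" => (starRingEnd ℂ)

/-- carrier predicate for the normalizer -/
def NPred (a b : ℂ) : Prop :=
  (b = 0 ∧ a ^ 8 = 1) ∨ (a = 0 ∧ b ^ 8 = 1) ∨
    (16 * a ^ 8 = 1 ∧ b ^ 4 = a ^ 4)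

lemma forward_alg {a b : ℂ} (hn : a * conj' a + b * conj' b = 1)
    (hW : QP (a * conj' b - conj' a * b) (a ^ 2 + b ^ 2))
    (hJ : QP (Complex.I * (a * conj' a - b * conj' b)) (-2 * Complex.I * a * b)) :
    NPred a b := by
  have hI : Complex.I ^ 2 = -1 := Complex.I_sq
  rcases hJ with ⟨hJ2, hJ1⟩ | ⟨hJ1, hJ2⟩
  · -- a = 0 or b = 0
    have hab : a = 0 ∨ b = 0 := by
      rcases mul_eq_zero.1 hJ2 with h | hb
      · rcases mul_eq_zero.1 h with h' | ha
        · exact absurd h' (by simp [Complex.I_ne_zero])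
        · exact Or.inl ha
      · exact Or.inr hb
    rcases hab with ha | hb
    · have hb1 : b * conj' b = 1 := by rw [ha] at hn; linear_combination hn
      rcases hW with ⟨hW2, _⟩ | ⟨_, hW1⟩
      · exfalso
        have hb0 : b = 0 := by
          have h2 : b ^ 2 = 0 := by rw [ha] at hW2; linear_combination hW2
          exact pow_eq_zero_iff (by norm_num) |>.1 h2
        rw [hb0] at hb1; simp at hb1
      · refine Or.inr (Or.inl ⟨ha, ?_⟩)
        rw [ha] at hW1; linear_combination hW1
    · have ha1 : a * conj' a = 1 := by rw [hb] at hn; linear_combination hn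
      rcases hW with ⟨hW2, _⟩ | ⟨_, hW1⟩
      · exfalso
        have ha0 : a = 0 := by
          have h2 : a ^ 2 = 0 := by rw [hb] at hW2; linear_combination hW2
          exact pow_eq_zero_iff (by norm_num) |>.1 h2
        rw [ha0] at ha1; simp at ha1
      · refine Or.inl ⟨hb, ?_⟩
        rw [hb] at hW1; linear_combination hW1
  · have hanb : a * conj' a = b * conj' b := by
      rcases mul_eq_zero.1 hJ1 with h | h
      · exact absurd h Complex.I_ne_zero
      · linear_combination h
    have h2a : 2 * (a * conj' a) = 1 := by linear_combination hn + hanb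
    have h16 : 16 * a ^ 4 * b ^ 4 = 1 := by
      linear_combination hJ2 + 16 * a ^ 4 * b ^ 4 * (1 - Complex.I ^ 2) * hI
    rcases hW with ⟨hW2, _⟩ | ⟨hW1, _⟩
    · refine Or.inr (Or.inr ⟨?_, ?_⟩)
      · linear_combination h16 + 16 * a ^ 4 * (a ^ 2 - b ^ 2) * hW2
      · have hfac : (b - Complex.I * a) * (b + Complex.I * a) = 0 := by
          linear_combination hW2 - a ^ 2 * hI
        rcases mul_eq_zero.1 hfac with h | h
        · have hb : b = Complex.I * a := by linear_combination h
          rw [hb]; linear_combination a ^ 4 * (Complex.I ^ 2 - 1) * hI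
        · have hb : b = -(Complex.I * a) := by linear_combination h
          rw [hb]; linear_combination a ^ 4 * (Complex.I ^ 2 - 1) * hI
    · have e1 : (2 * (a * conj' b) - 1) * (2 * (a * conj' b) + 1) = 0 := by
        linear_combination (4 * a * conj' b) * hW1 + (2 * (b * conj' b) + 1) * h2a
          + (-2 : ℂ) * hanb
      have ha0 : a ≠ 0 := by
        intro h0; rw [h0] at h2a; simp at h2a
      rcases mul_eq_zero.1 e1 with h | h
      · have hcb : conj' b = conj' a := by
          have h3 : a * (conj' b - conj' a) = 0 := by linear_combination h / 2 - h2a / 2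
          rcases mul_eq_zero.1 h3 with h' | h'
          · exact absurd h' ha0
          · linear_combination h'
        have hb : b = a := by
          have := congrArg conj' hcb; simpa using this
        refine Or.inr (Or.inr ⟨?_, by rw [hb]⟩)
        rw [hb] at h16; linear_combination h16
      · have hcb : conj' b = -conj' a := by
          have h3 : a * (conj' b + conj' a) = 0 := by linear_combination h / 2 + h2a / 2
          rcases mul_eq_zero.1 h3 with h' | h'
          · exact absurd h' ha0
          · linear_combination h'
        have hb : b = -a := by
          have := congrArg conj' hcb; simpa using this
        refine Or.inr (Or.inr ⟨?_, by rw [hb]; ring⟩)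
        rw [hb] at h16; linear_combination h16
end BO2
namespace BO2
open BO Complex

local notation "conj'" => (starRingEnd ℂ)

lemma normSq_eq_of_pow {z : ℂ} {r : ℝ} (hr : 0 ≤ r) (h : (normSq z : ℝ) ^ 8 = r ^ 8) :
    z * conj' z = (r : ℂ) := by
  rw [Complex.mul_conj]
  norm_cast
  exact (pow_left_inj₀ (normSq_nonneg z) hr (by norm_num)).1 h

lemma norm_one_of_pow8 {a : ℂ} (h : a ^ 8 = 1) : a * conj' a = 1 := by
  have h1 : (normSq a : ℝ) ^ 8 = 1 ^ 8 := by
    have := congrArg normSq h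
    rw [_root_.map_pow] at this
    simpa using this
  simpa using normSq_eq_of_pow (by norm_num) h1

lemma norm_half_of_pow8 {a : ℂ} (h : 16 * a ^ 8 = 1) : a * conj' a = 1 / 2 := by
  have h1 : (normSq a : ℝ) ^ 8 = (1 / 2 : ℝ) ^ 8 := by
    have := congrArg normSq h
    rw [_root_.map_mul, _root_.map_pow] at this
    have h16 : normSq (16 : ℂ) = 256 := by norm_num [Complex.normSq_apply]
    rw [h16, _root_.map_one] at this
    nlinarith [this]
  have := normSq_eq_of_pow (by norm_num : (0:ℝ) ≤ 1/2) h1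
  simpa using this

lemma NPred_half {a b : ℂ} (h16 : 16 * a ^ 8 = 1) (hb4 : b ^ 4 = a ^ 4) :
    a * conj' a = 1 / 2 ∧ b * conj' b = 1 / 2 := by
  refine ⟨norm_half_of_pow8 h16, norm_half_of_pow8 ?_⟩
  rw [show b ^ 8 = (b ^ 4) ^ 2 from by ring, hb4]; linear_combination h16

lemma NPred_norm {a b : ℂ} (h : NPred a b) : a * conj' a + b * conj' b = 1 := by
  rcases h with ⟨hb, ha⟩ | ⟨ha, hb⟩ | ⟨h16, hb4⟩
  · rw [hb, norm_one_of_pow8 ha]; simp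
  · rw [ha, norm_one_of_pow8 hb]; simp
  · obtain ⟨h1, h2⟩ := NPred_half h16 hb4
    rw [h1, h2]; norm_num

lemma NPred_inv {a b : ℂ} (h : NPred a b) : NPred (conj' a) (-b) := by
  rcases h with ⟨hb, ha⟩ | ⟨ha, hb⟩ | ⟨h16, hb4⟩
  · exact Or.inl ⟨by rw [hb, neg_zero], by rw [← _root_.map_pow, ha, _root_.map_one]⟩
  · exact Or.inr (Or.inl ⟨by rw [ha, _root_.map_zero], by rw [show (-b) ^ 8 = b ^ 8 from by ring, hb]⟩)
  · have h2a : a * conj' a = 1 / 2 := (NPred_half h16 hb4).1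
    have hval : a = 2 * a ^ 2 * conj' a := by linear_combination (-2) * a * h2a
    refine Or.inr (Or.inr ⟨?_, ?_⟩)
    · have := congrArg conj' h16
      simp only [_root_.map_mul, _root_.map_pow, _root_.map_one, _root_.map_ofNat] at this
      exact this
    · linear_combination hb4 + (a ^ 3 + a ^ 2 * (2 * a ^ 2 * conj' a) +
        a * (2 * a ^ 2 * conj' a) ^ 2 + (2 * a ^ 2 * conj' a) ^ 3) * hval +
        (conj' a) ^ 4 * h16

lemma backward_alg {a b : ℂ} (hN : NPred a b) :
    QP (a * conj' b - conj' a * b) (a ^ 2 + b ^ 2) ∧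
      QP (Complex.I * (a * conj' a - b * conj' b)) (-2 * Complex.I * a * b) := by
  have hI : Complex.I ^ 2 = -1 := Complex.I_sq
  rcases hN with ⟨hb, ha⟩ | ⟨ha, hb⟩ | ⟨h16, hb4⟩
  · have ha1 : a * conj' a = 1 := norm_one_of_pow8 ha
    subst hb
    constructor
    · refine Or.inr ⟨by simp, ?_⟩
      linear_combination ha
    · refine Or.inl ⟨by ring, ?_⟩
      simp only [_root_.map_zero, mul_zero, zero_mul, sub_zero]
      linear_combination (((a * conj' a) ^ 3 + (a * conj' a) ^ 2 + a * conj' a + 1) *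
        Complex.I ^ 4) * ha1 + (Complex.I ^ 2 - 1) * hI
  · have hb1 : b * conj' b = 1 := norm_one_of_pow8 hb
    subst ha
    constructor
    · refine Or.inr ⟨by simp, ?_⟩
      linear_combination hb
    · refine Or.inl ⟨by ring, ?_⟩
      simp only [_root_.map_zero, mul_zero, zero_mul, zero_sub]
      linear_combination (((b * conj' b) ^ 3 + (b * conj' b) ^ 2 + b * conj' b + 1) *
        Complex.I ^ 4) * hb1 + (Complex.I ^ 2 - 1) * hI
  · have h2a : a * conj' a = 1 / 2 := (NPred_half h16 hb4).1
    have h2a4 : 16 * (a * conj' a) ^ 4 = 1 := by rw [h2a]; norm_num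
    have hfac : (b - a) * (b + a) * ((b - Complex.I * a) * (b + Complex.I * a)) = 0 := by
      linear_combination hb4 + (a ^ 4 - a ^ 2 * b ^ 2) * hI
    rcases mul_eq_zero.1 hfac with h12 | h34
    · rcases mul_eq_zero.1 h12 with h | h
      · -- b = a
        have hb : b = a := by linear_combination h
        subst hb
        constructor
        · exact Or.inr ⟨by ring, by linear_combination h16⟩
        · refine Or.inr ⟨by ring, ?_⟩
          linear_combination Complex.I ^ 4 * h16 + (Complex.I ^ 2 - 1) * hI
      · -- b = -a
        have hb : b = -a := by linear_combination h
        subst hb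
        constructor
        · refine Or.inr ⟨?_, by linear_combination h16⟩
          simp only [_root_.map_neg]; ring
        · refine Or.inr ⟨?_, ?_⟩
          · simp only [_root_.map_neg]; ring
          · linear_combination Complex.I ^ 4 * h16 + (Complex.I ^ 2 - 1) * hI
    · rcases mul_eq_zero.1 h34 with h | h
      · -- b = I * a
        have hb : b = Complex.I * a := by linear_combination h
        subst hb
        constructor
        · refine Or.inl ⟨by linear_combination a ^ 2 * hI, ?_⟩
          simp only [_root_.map_mul, Complex.conj_I]
          linear_combination Complex.I ^ 4 * h2a4 + (Complex.I ^ 2 - 1) * hI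
        · refine Or.inr ⟨?_, ?_⟩
          · simp only [_root_.map_mul, Complex.conj_I]
            linear_combination Complex.I * (a * conj' a) * hI
          · linear_combination Complex.I ^ 8 * h16 +
              (Complex.I ^ 2 - 1) * (Complex.I ^ 4 + 1) * hI
      · -- b = -(I * a)
        have hb : b = -(Complex.I * a) := by linear_combination h
        subst hb
        constructor
        · refine Or.inl ⟨by linear_combination a ^ 2 * hI, ?_⟩
          simp only [_root_.map_neg, _root_.map_mul, Complex.conj_I]
          linear_combination Complex.I ^ 4 * h2a4 + (Complex.I ^ 2 - 1) * hI
        · refine Or.inr ⟨?_, ?_⟩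
          · simp only [_root_.map_neg, _root_.map_mul, Complex.conj_I]
            linear_combination Complex.I * (a * conj' a) * hI
          · linear_combination Complex.I ^ 8 * h16 +
              (Complex.I ^ 2 - 1) * (Complex.I ^ 4 + 1) * hI

end BO2
namespace BO2
open BO Complex

local notation "conj'" => (starRingEnd ℂ)

lemma A_conj_w (g : SU2) :
    A (g * w * g⁻¹) = A g * conj' (B g) - conj' (A g) * B g := by
  simp [A_mul, B_mul, A_inv, B_inv, A_w, B_w]; ring

lemma B_conj_w (g : SU2) : B (g * w * g⁻¹) = A g ^ 2 + B g ^ 2 := by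
  simp [A_mul, B_mul, A_inv, B_inv, A_w, B_w]; ring

lemma A_conj_j (g : SU2) :
    A (g * jmat * g⁻¹) = Complex.I * (A g * conj' (A g) - B g * conj' (B g)) := by
  simp [A_mul, B_mul, A_inv, B_inv, A_j, B_j]; ring

lemma B_conj_j (g : SU2) : B (g * jmat * g⁻¹) = -2 * Complex.I * A g * B g := by
  simp [A_mul, B_mul, A_inv, B_inv, A_j, B_j]; ring

lemma Q_def : Q = Subgroup.closure {w, jmat} := rfl

lemma conj_mem_Q {u : SU2} (hu : NPred (A u) (B u)) :
    Q.map (MulAut.conj u).toMonoidHom ≤ Q := by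
  obtain ⟨hQW, hQJ⟩ := backward_alg hu
  rw [Q, MonoidHom.map_closure]
  rw [Subgroup.closure_le]
  rintro x hx
  simp only [Set.image_insert_eq, Set.image_singleton, Set.mem_insert_iff,
    Set.mem_singleton_iff] at hx
  rcases hx with rfl | rfl
  · rw [SetLike.mem_coe, ← Q_def, mem_Q_iff]
    have he : (MulAut.conj u).toMonoidHom w = u * w * u⁻¹ := rfl
    rw [he, A_conj_w, B_conj_w]
    exact hQW
  · rw [SetLike.mem_coe, ← Q_def, mem_Q_iff]
    have he : (MulAut.conj u).toMonoidHom jmat = u * jmat * u⁻¹ := rfl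
    rw [he, A_conj_j, B_conj_j]
    exact hQJ

lemma mem_normalizer_iff_NPred (g : SU2) : g ∈ Subgroup.normalizer (Q : Set SU2) ↔ NPred (A g) (B g) := by
  constructor
  · intro h
    have h1 := (Subgroup.mem_normalizer_iff.mp h w).mp w_mem_Q
    have h2 := (Subgroup.mem_normalizer_iff.mp h jmat).mp j_mem_Q
    rw [mem_Q_iff, A_conj_w, B_conj_w] at h1
    rw [mem_Q_iff, A_conj_j, B_conj_j] at h2
    exact forward_alg (norm_AB g) h1 h2
  · intro hN
    rw [Subgroup.mem_normalizer_iff]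
    intro h
    constructor
    · intro hh
      have hm : (MulAut.conj g).toMonoidHom h ∈ Q.map (MulAut.conj g).toMonoidHom :=
        Subgroup.mem_map_of_mem _ hh
      exact conj_mem_Q hN hm
    · intro hh
      have hNinv : NPred (A g⁻¹) (B g⁻¹) := by rw [A_inv, B_inv]; exact NPred_inv hN
      have hm : (MulAut.conj g⁻¹).toMonoidHom (g * h * g⁻¹) ∈
          Q.map (MulAut.conj g⁻¹).toMonoidHom := Subgroup.mem_map_of_mem _ hh
      have := conj_mem_Q hNinv hm
      have he : (MulAut.conj g⁻¹).toMonoidHom (g * h * g⁻¹) = h := by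
        show g⁻¹ * (g * h * g⁻¹) * g⁻¹⁻¹ = h
        group
      rwa [he] at this

end BO2
namespace BO2
open BO Complex

local notation "conj'" => (starRingEnd ℂ)

lemma I_pow_four : Complex.I ^ 4 = 1 := by
  rw [show (4 : ℕ) = 2 * 2 from rfl, pow_mul, Complex.I_sq]; norm_num

lemma quartic_eq {a b : ℂ} (h : b ^ 4 = a ^ 4) :
    b = a ∨ b = -a ∨ b = Complex.I * a ∨ b = -(Complex.I * a) := by
  have hI : Complex.I ^ 2 = -1 := Complex.I_sq
  have hfac : (b - a) * (b + a) * ((b - Complex.I * a) * (b + Complex.I * a)) = 0 := by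
    linear_combination h + (a ^ 4 - a ^ 2 * b ^ 2) * hI
  rcases mul_eq_zero.1 hfac with h12 | h34
  · rcases mul_eq_zero.1 h12 with h' | h'
    · exact Or.inl (by linear_combination h')
    · exact Or.inr (Or.inl (by linear_combination h'))
  · rcases mul_eq_zero.1 h34 with h' | h'
    · exact Or.inr (Or.inr (Or.inl (by linear_combination h')))
    · exact Or.inr (Or.inr (Or.inr (by linear_combination h')))

/-- 8th roots of unity -/
def R8 : Set ℂ := {x | x ^ 8 = 1}
/-- scaled 8th roots of unity -/
def R8' : Set ℂ := {x | 16 * x ^ 8 = 1}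

/-- pair set -/
def NP : Set (ℂ × ℂ) := {p | NPred p.1 p.2}

def SA : Set (ℂ × ℂ) := (fun a : ℂ => (a, (0 : ℂ))) '' R8
def SB : Set (ℂ × ℂ) := (fun b : ℂ => ((0 : ℂ), b)) '' R8
def Ce (ε : ℂ) : Set (ℂ × ℂ) := (fun a : ℂ => (a, ε * a)) '' R8'

lemma NP_eq : NP = SA ∪ (SB ∪ (Ce 1 ∪ (Ce (-1) ∪ (Ce Complex.I ∪ Ce (-Complex.I))))) := by
  have hI4 : Complex.I ^ 4 = 1 := I_pow_four
  ext ⟨a, b⟩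
  simp only [NP, NPred, SA, SB, Ce, R8, R8', Set.mem_setOf_eq, Set.mem_union, Set.mem_image,
    Prod.mk.injEq]
  constructor
  · rintro (⟨hb, ha⟩ | ⟨ha, hb⟩ | ⟨h16, hb4⟩)
    · exact Or.inl ⟨a, ha, rfl, hb.symm⟩
    · exact Or.inr (Or.inl ⟨b, hb, ha.symm, rfl⟩)
    · rcases quartic_eq hb4 with h | h | h | h
      · exact Or.inr (Or.inr (Or.inl ⟨a, h16, rfl, by rw [h, one_mul]⟩))
      · exact Or.inr (Or.inr (Or.inr (Or.inl ⟨a, h16, rfl, by rw [h]; ring⟩)))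
      · exact Or.inr (Or.inr (Or.inr (Or.inr (Or.inl ⟨a, h16, rfl, h.symm⟩))))
      · exact Or.inr (Or.inr (Or.inr (Or.inr (Or.inr ⟨a, h16, rfl, by rw [h]; ring⟩))))
  · rintro (⟨x, hx, rfl, rfl⟩ | ⟨x, hx, rfl, rfl⟩ | ⟨x, hx, rfl, rfl⟩ | ⟨x, hx, rfl, rfl⟩ |
      ⟨x, hx, rfl, rfl⟩ | ⟨x, hx, rfl, rfl⟩)
    · exact Or.inl ⟨rfl, hx⟩
    · exact Or.inr (Or.inl ⟨rfl, hx⟩)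
    · exact Or.inr (Or.inr ⟨hx, by ring⟩)
    · exact Or.inr (Or.inr ⟨hx, by ring⟩)
    · exact Or.inr (Or.inr ⟨hx, by rw [mul_pow, hI4, one_mul]⟩)
    · exact Or.inr (Or.inr ⟨hx, by rw [show (-Complex.I * x) ^ 4 = Complex.I ^ 4 * x ^ 4 from by ring, hI4, one_mul]⟩)

end BO2
namespace BO2
open BO Complex

local notation "conj'" => (starRingEnd ℂ)

lemma R8_eq_finset : R8 = ↑(Polynomial.nthRootsFinset 8 (1 : ℂ)) := by
  ext x
  rw [R8, Set.mem_setOf_eq, Finset.mem_coe, Polynomial.mem_nthRootsFinset (by norm_num : 0 < 8)]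

lemma R8_finite : R8.Finite := by rw [R8_eq_finset]; exact (Polynomial.nthRootsFinset 8 (1 : ℂ)).finite_toSet

lemma R8_ncard : R8.ncard = 8 := by
  rw [R8_eq_finset, Set.ncard_coe_finset,
    (Complex.isPrimitiveRoot_exp 8 (by norm_num)).card_nthRootsFinset]

noncomputable def s2 : ℂ := ((Real.sqrt 2 : ℝ) : ℂ)

lemma s2_sq : s2 ^ 2 = 2 := by
  rw [s2]
  norm_cast
  rw [Real.sq_sqrt] <;> norm_num

lemma s2_pow8 : s2 ^ 8 = 16 := by
  rw [show (8 : ℕ) = 2 * 4 from rfl, pow_mul, s2_sq]; norm_num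

lemma s2_ne : s2 ≠ 0 := by
  intro h
  have := s2_sq
  rw [h] at this; norm_num at this

lemma R8'_eq : R8' = (fun x : ℂ => x * s2⁻¹) '' R8 := by
  ext x
  simp only [R8, R8', Set.mem_setOf_eq, Set.mem_image]
  constructor
  · intro h
    refine ⟨x * s2, ?_, mul_inv_cancel_right₀ s2_ne x⟩
    rw [mul_pow, s2_pow8]
    linear_combination h
  · rintro ⟨y, hy, rfl⟩
    rw [mul_pow, inv_pow, s2_pow8, hy]
    norm_num

lemma R8'_finite : R8'.Finite := by rw [R8'_eq]; exact R8_finite.image _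

lemma R8'_ncard : R8'.ncard = 8 := by
  rw [R8'_eq, Set.ncard_image_of_injective _ (mul_left_injective₀ (inv_ne_zero s2_ne)), R8_ncard]

lemma zero_not_R8 : (0 : ℂ) ∉ R8 := by simp [R8]
lemma zero_not_R8' : (0 : ℂ) ∉ R8' := by simp [R8']

lemma SA_finite : SA.Finite := R8_finite.image _
lemma SB_finite : SB.Finite := R8_finite.image _
lemma Ce_finite (ε : ℂ) : (Ce ε).Finite := R8'_finite.image _

lemma SA_ncard : SA.ncard = 8 := by
  rw [SA, Set.ncard_image_of_injective _ (fun x y h => (Prod.ext_iff.1 h).1), R8_ncard]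
lemma SB_ncard : SB.ncard = 8 := by
  rw [SB, Set.ncard_image_of_injective _ (fun x y h => (Prod.ext_iff.1 h).2), R8_ncard]
lemma Ce_ncard (ε : ℂ) : (Ce ε).ncard = 8 := by
  rw [Ce, Set.ncard_image_of_injective _ (fun x y h => (Prod.ext_iff.1 h).1), R8'_ncard]

lemma SA_disj_SB : Disjoint SA SB := by
  rw [Set.disjoint_left]
  rintro p ⟨x, hx, rfl⟩ ⟨y, hy, hp⟩
  obtain ⟨h1, h2⟩ := Prod.ext_iff.1 hp
  dsimp at h1 h2
  rw [← h1] at hx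
  exact zero_not_R8 hx

lemma SA_disj_Ce (ε : ℂ) (hε : ε ≠ 0) : Disjoint SA (Ce ε) := by
  rw [Set.disjoint_left]
  rintro p ⟨x, hx, rfl⟩ ⟨y, hy, hp⟩
  obtain ⟨h1, h2⟩ := Prod.ext_iff.1 hp
  dsimp at h1 h2
  rcases mul_eq_zero.1 h2 with h | h
  · exact hε h
  · rw [h] at hy; exact zero_not_R8' hy

lemma SB_disj_Ce (ε : ℂ) : Disjoint SB (Ce ε) := by
  rw [Set.disjoint_left]
  rintro p ⟨x, hx, rfl⟩ ⟨y, hy, hp⟩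
  obtain ⟨h1, h2⟩ := Prod.ext_iff.1 hp
  dsimp at h1 h2
  rw [h1] at hy
  exact zero_not_R8' hy

lemma Ce_disj {ε ε' : ℂ} (h : ε ≠ ε') : Disjoint (Ce ε) (Ce ε') := by
  rw [Set.disjoint_left]
  rintro p ⟨x, hx, rfl⟩ ⟨y, hy, hp⟩
  obtain ⟨h1, h2⟩ := Prod.ext_iff.1 hp
  dsimp at h1 h2
  rw [h1] at h2
  have hx0 : x ≠ 0 := fun h0 => zero_not_R8' (h0 ▸ hx)
  exact h (mul_right_cancel₀ hx0 h2).symm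

lemma NP_finite : NP.Finite := by
  rw [NP_eq]
  exact SA_finite.union (SB_finite.union ((Ce_finite 1).union ((Ce_finite (-1)).union
    ((Ce_finite Complex.I).union (Ce_finite (-Complex.I))))))

lemma NP_ncard : NP.ncard = 48 := by
  have ne1 : (Complex.I : ℂ) ≠ -Complex.I := by intro h; rw [Complex.ext_iff] at h; norm_num at h
  have ne2 : (-1 : ℂ) ≠ Complex.I := by intro h; rw [Complex.ext_iff] at h; norm_num at h
  have ne3 : (-1 : ℂ) ≠ -Complex.I := by intro h; rw [Complex.ext_iff] at h; norm_num at h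
  have ne4 : (1 : ℂ) ≠ -1 := by intro h; rw [Complex.ext_iff] at h; norm_num at h
  have ne5 : (1 : ℂ) ≠ Complex.I := by intro h; rw [Complex.ext_iff] at h; norm_num at h
  have ne6 : (1 : ℂ) ≠ -Complex.I := by intro h; rw [Complex.ext_iff] at h; norm_num at h
  have f34 : (Ce Complex.I ∪ Ce (-Complex.I)).Finite := (Ce_finite _).union (Ce_finite _)
  have f234 : (Ce (-1) ∪ (Ce Complex.I ∪ Ce (-Complex.I))).Finite := (Ce_finite _).union f34
  have f1234 : (Ce 1 ∪ (Ce (-1) ∪ (Ce Complex.I ∪ Ce (-Complex.I)))).Finite :=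
    (Ce_finite _).union f234
  have fB : (SB ∪ (Ce 1 ∪ (Ce (-1) ∪ (Ce Complex.I ∪ Ce (-Complex.I))))).Finite :=
    SB_finite.union f1234
  have h34 : (Ce Complex.I ∪ Ce (-Complex.I)).ncard = 16 := by
    rw [Set.ncard_union_eq (Ce_disj ne1) (Ce_finite _) (Ce_finite _), Ce_ncard, Ce_ncard]
  have h234 : (Ce (-1) ∪ (Ce Complex.I ∪ Ce (-Complex.I))).ncard = 24 := by
    rw [Set.ncard_union_eq (Set.disjoint_union_right.2 ⟨Ce_disj ne2, Ce_disj ne3⟩)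
      (Ce_finite _) f34, Ce_ncard, h34]
  have h1234 : (Ce 1 ∪ (Ce (-1) ∪ (Ce Complex.I ∪ Ce (-Complex.I)))).ncard = 32 := by
    rw [Set.ncard_union_eq (Set.disjoint_union_right.2 ⟨Ce_disj ne4,
      Set.disjoint_union_right.2 ⟨Ce_disj ne5, Ce_disj ne6⟩⟩) (Ce_finite _) f234,
      Ce_ncard, h234]
  have hB : (SB ∪ (Ce 1 ∪ (Ce (-1) ∪ (Ce Complex.I ∪ Ce (-Complex.I))))).ncard = 40 := by
    rw [Set.ncard_union_eq (Set.disjoint_union_right.2 ⟨SB_disj_Ce 1,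
      Set.disjoint_union_right.2 ⟨SB_disj_Ce (-1),
      Set.disjoint_union_right.2 ⟨SB_disj_Ce Complex.I, SB_disj_Ce (-Complex.I)⟩⟩⟩)
      SB_finite f1234, SB_ncard, h1234]
  rw [NP_eq, Set.ncard_union_eq (Set.disjoint_union_right.2 ⟨SA_disj_SB,
    Set.disjoint_union_right.2 ⟨SA_disj_Ce 1 (by norm_num),
    Set.disjoint_union_right.2 ⟨SA_disj_Ce (-1) (by norm_num),
    Set.disjoint_union_right.2 ⟨SA_disj_Ce Complex.I Complex.I_ne_zero,
      SA_disj_Ce (-Complex.I) (by simpa using Complex.I_ne_zero)⟩⟩⟩⟩)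
    SA_finite fB, SA_ncard, hB]

end BO2
namespace BO2
open BO Complex

local notation "conj'" => (starRingEnd ℂ)

noncomputable def toNP (g : ↥(Subgroup.normalizer (Q : Set SU2))) : ↥NP :=
  ⟨(A g.1, B g.1), (mem_normalizer_iff_NPred g.1).1 g.2⟩

lemma toNP_bij : Function.Bijective toNP := by
  constructor
  · intro g h he
    have h1 := congrArg (fun p => (p : ℂ × ℂ).1) (congrArg Subtype.val he)
    have h2 := congrArg (fun p => (p : ℂ × ℂ).2) (congrArg Subtype.val he)
    exact Subtype.ext (ext_AB h1 h2)
  · rintro ⟨⟨a, b⟩, hp⟩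
    have hn : a * conj' a + b * conj' b = 1 := NPred_norm hp
    have hmem : P a b ∈ Matrix.specialUnitaryGroup (Fin 2) ℂ := mem_su2 a b hn
    have hA := A_P (g := ⟨P a b, hmem⟩) rfl
    refine ⟨⟨⟨P a b, hmem⟩, ?_⟩, ?_⟩
    · rw [mem_normalizer_iff_NPred, hA.1, hA.2]
      exact hp
    · apply Subtype.ext
      show (A (⟨P a b, hmem⟩ : SU2), B (⟨P a b, hmem⟩ : SU2)) = (a, b)
      rw [hA.1, hA.2]

end BO2

/-- The normalizer of `Q` in `SU(2)` is a finite group of order `48`. -/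
theorem normalizer_Q_card_48 :
    Finite ↥(Subgroup.normalizer (Q : Set SU2)) ∧ Nat.card ↥(Subgroup.normalizer (Q : Set SU2)) = 48 := by
  have e : ↥(Subgroup.normalizer (Q : Set SU2)) ≃ ↥BO2.NP := Equiv.ofBijective _ BO2.toNP_bij
  have hfin : Finite ↥BO2.NP := BO2.NP_finite.to_subtype
  refine ⟨Finite.of_equiv _ e.symm, ?_⟩
  rw [Nat.card_congr e, Nat.card_coe_set_eq, BO2.NP_ncard]
end
end

section
/- The normalizer of S in SU(2) equals S, where S is the maximal discrete 2-toral subgroup of SU(2) generated by the 2-power torsion of the diagonal maximal torus together with w. -/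
open Matrix Complex

noncomputable section

/-- The underlying set of the diagonal maximal torus of `SU(2)`: the matrices
`diag (a, conj a)` with `a` a complex number of absolute value `1`. -/
def Tset : Set SU2 :=
  {x : SU2 | ∃ a : ℂ, ‖a‖ = 1 ∧
    (x : Matrix (Fin 2) (Fin 2) ℂ) = !![a, 0; 0, (starRingEnd ℂ) a]}

/-- The maximal discrete 2-toral subgroup `S` of `SU(2)`, generated by `w` together with
the elements of the diagonal maximal torus of 2-power order. -/
def S : Subgroup SU2 :=
  Subgroup.closure ({w} ∪ {x : SU2 | x ∈ Tset ∧ ∃ n : ℕ, x ^ 2 ^ n = 1})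


/-- 2-power root of unity predicate. -/
def rt2 (a : ℂ) : Prop := ∃ n : ℕ, a ^ 2 ^ n = 1

lemma rt2_one : rt2 1 := ⟨0, one_pow _⟩

lemma rt2_mul {a b : ℂ} (ha : rt2 a) (hb : rt2 b) : rt2 (a * b) := by
  obtain ⟨m, hm⟩ := ha; obtain ⟨n, hn⟩ := hb
  refine ⟨m + n, ?_⟩
  rw [mul_pow]
  rw [pow_add, pow_mul, hm, one_pow, pow_mul', hn, one_pow, one_mul]

lemma rt2_conj {a : ℂ} (ha : rt2 a) : rt2 ((starRingEnd ℂ) a) := by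
  obtain ⟨n, hn⟩ := ha
  exact ⟨n, by rw [← map_pow, hn, _root_.map_one]⟩

lemma rt2_neg {a : ℂ} (ha : rt2 a) : rt2 (-a) := by
  obtain ⟨n, hn⟩ := ha
  refine ⟨n + 1, ?_⟩
  have he : Even (2 ^ (n + 1)) := ⟨2 ^ n, by ring⟩
  rw [he.neg_pow, pow_succ, pow_mul, hn, one_pow]

lemma rt2_of_sq {a : ℂ} (ha : rt2 (a ^ 2)) : rt2 a := by
  obtain ⟨n, hn⟩ := ha
  exact ⟨n + 1, by rw [pow_succ', pow_mul]; exact hn⟩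

lemma real_pow_eq_one {x : ℝ} {n : ℕ} (h : x ^ n = 1) (hx : 0 ≤ x) (hn : n ≠ 0) : x = 1 := by
  rcases lt_trichotomy x 1 with h1 | h1 | h1
  · have := pow_lt_one₀ hx h1 hn
    rw [h] at this; exact absurd this (lt_irrefl 1)
  · exact h1
  · have := one_lt_pow₀ h1 hn
    rw [h] at this; exact absurd this (lt_irrefl 1)

lemma rt2_norm {a : ℂ} (ha : rt2 a) : (starRingEnd ℂ) a * a = 1 := by
  obtain ⟨n, hn⟩ := ha
  have habs : ‖a‖ = 1 := by
    have : ‖a‖ ^ 2 ^ n = 1 := by rw [← norm_pow, hn, norm_one]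
    exact real_pow_eq_one this (norm_nonneg a) (by positivity)
  have := Complex.normSq_eq_norm_sq a
  rw [habs] at this
  have h2 : (Complex.normSq a : ℂ) = 1 := by rw [this]; norm_num
  rw [← Complex.mul_conj a] at h2
  linear_combination h2

lemma rt2_abs {a : ℂ} (ha : rt2 a) : ‖a‖ = 1 := by
  obtain ⟨n, hn⟩ := ha
  have : ‖a‖ ^ 2 ^ n = 1 := by rw [← norm_pow, hn, norm_one]
  exact real_pow_eq_one this (norm_nonneg a) (by positivity)

lemma rt2_ne_zero {a : ℂ} (ha : rt2 a) : a ≠ 0 := by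
  intro h
  obtain ⟨n, hn⟩ := ha
  rw [h, zero_pow (by positivity)] at hn
  exact zero_ne_one hn

local notation "𝕄" => Matrix (Fin 2) (Fin 2) ℂ

def Dm (a : ℂ) : Matrix (Fin 2) (Fin 2) ℂ := !![a, 0; 0, (starRingEnd ℂ) a]
def Am (a : ℂ) : Matrix (Fin 2) (Fin 2) ℂ := !![0, (starRingEnd ℂ) a; -a, 0]

lemma Dm_mul_Dm (a b : ℂ) : Dm a * Dm b = Dm (a * b) := by
  simp [Dm, Matrix.mul_fin_two, _root_.map_mul]

lemma Dm_mul_Am (a b : ℂ) : Dm a * Am b = Am ((starRingEnd ℂ) a * b) := by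
  simp [Dm, Am, Matrix.mul_fin_two, _root_.map_mul, map_neg]

lemma Am_mul_Dm (a b : ℂ) : Am a * Dm b = Am (a * b) := by
  simp [Dm, Am, Matrix.mul_fin_two, _root_.map_mul, map_neg]

lemma Am_mul_Am (a b : ℂ) : Am a * Am b = Dm (-((starRingEnd ℂ) a) * b) := by
  simp [Dm, Am, Matrix.mul_fin_two, _root_.map_mul, map_neg]

lemma star_Dm (a : ℂ) : star (Dm a) = Dm ((starRingEnd ℂ) a) := by
  ext i j
  fin_cases i <;> fin_cases j <;>
    simp [Dm, Matrix.star_eq_conjTranspose, Matrix.conjTranspose_apply]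

lemma star_Am (a : ℂ) : star (Am a) = Am (-a) := by
  ext i j
  fin_cases i <;> fin_cases j <;>
    simp [Am, Matrix.star_eq_conjTranspose, Matrix.conjTranspose_apply]

lemma Dm_pow (a : ℂ) (k : ℕ) : Dm a ^ k = Dm (a ^ k) := by
  induction k with
  | zero => simp [Dm, Matrix.one_fin_two]
  | succ n ih => rw [pow_succ, ih, Dm_mul_Dm, ← pow_succ]

lemma Dm_one : Dm 1 = 1 := by simp [Dm, Matrix.one_fin_two]

lemma Dm_inj {a b : ℂ} (h : Dm a = Dm b) : a = b := by
  have := congrFun (congrFun h 0) 0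
  simpa [Dm] using this

lemma Dm_ne_Am {a b : ℂ} (ha : a ≠ 0) : Dm a ≠ Am b := by
  intro h
  have := congrFun (congrFun h 0) 0
  simp [Dm, Am] at this
  exact ha this

lemma Am_inj {a b : ℂ} (h : Am a = Am b) : a = b := by
  have := congrFun (congrFun h 1) 0
  simpa [Am] using this

lemma coe_mul_SU2 (x y : SU2) : ((x * y : SU2) : Matrix (Fin 2) (Fin 2) ℂ) = (x : Matrix (Fin 2) (Fin 2) ℂ) * y := rfl

lemma coe_inv_SU2 (x : SU2) : ((x⁻¹ : SU2) : Matrix (Fin 2) (Fin 2) ℂ) = star (x : Matrix (Fin 2) (Fin 2) ℂ) := rfl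

lemma coe_pow_SU2 (x : SU2) (k : ℕ) : ((x ^ k : SU2) : Matrix (Fin 2) (Fin 2) ℂ) = (x : Matrix (Fin 2) (Fin 2) ℂ) ^ k := by
  induction k with
  | zero => rfl
  | succ n ih => rw [pow_succ, pow_succ, coe_mul_SU2, ih]

/-- The candidate subgroup: diagonal or antidiagonal with 2-power root entries. -/
def K : Subgroup SU2 where
  carrier := {x : SU2 | ∃ a : ℂ, rt2 a ∧
    ((x : Matrix (Fin 2) (Fin 2) ℂ) = Dm a ∨ (x : Matrix (Fin 2) (Fin 2) ℂ) = Am a)}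
  one_mem' := ⟨1, rt2_one, Or.inl (by rw [Dm_one]; rfl)⟩
  mul_mem' := by
    rintro x y ⟨a, ha, hx | hx⟩ ⟨b, hb, hy | hy⟩
    · exact ⟨a * b, rt2_mul ha hb, Or.inl (by rw [coe_mul_SU2, hx, hy, Dm_mul_Dm])⟩
    · exact ⟨(starRingEnd ℂ) a * b, rt2_mul (rt2_conj ha) hb,
        Or.inr (by rw [coe_mul_SU2, hx, hy, Dm_mul_Am])⟩
    · exact ⟨a * b, rt2_mul ha hb, Or.inr (by rw [coe_mul_SU2, hx, hy, Am_mul_Dm])⟩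
    · exact ⟨-((starRingEnd ℂ) a) * b, rt2_mul (rt2_neg (rt2_conj ha)) hb,
        Or.inl (by rw [coe_mul_SU2, hx, hy, Am_mul_Am])⟩
  inv_mem' := by
    rintro x ⟨a, ha, hx | hx⟩
    · exact ⟨(starRingEnd ℂ) a, rt2_conj ha, Or.inl (by rw [coe_inv_SU2, hx, star_Dm])⟩
    · exact ⟨-a, rt2_neg ha, Or.inr (by rw [coe_inv_SU2, hx, star_Am])⟩

lemma w_coe : (w : Matrix (Fin 2) (Fin 2) ℂ) = Am 1 := by
  simp [w, Am]

lemma diag_mem_S {x : SU2} {a : ℂ} (ha : rt2 a)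
    (hx : (x : Matrix (Fin 2) (Fin 2) ℂ) = Dm a) : x ∈ S := by
  apply Subgroup.subset_closure
  right
  refine ⟨⟨a, rt2_abs ha, hx⟩, ?_⟩
  obtain ⟨n, hn⟩ := ha
  exact ⟨n, Subtype.ext (by rw [coe_pow_SU2, hx, Dm_pow, hn, Dm_one]; rfl)⟩

lemma S_eq_K : S = K := by
  apply le_antisymm
  · rw [S, Subgroup.closure_le]
    rintro x (hx | ⟨⟨a, _, hx⟩, n, hn⟩)
    · rw [Set.mem_singleton_iff] at hx
      exact ⟨1, rt2_one, Or.inr (by rw [hx, w_coe])⟩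
    · refine ⟨a, ⟨n, ?_⟩, Or.inl hx⟩
      have : ((x ^ 2 ^ n : SU2) : Matrix (Fin 2) (Fin 2) ℂ) = 1 := by rw [hn]; rfl
      rw [coe_pow_SU2, hx] at this
      change Dm a ^ 2 ^ n = 1 at this
      rw [Dm_pow, ← Dm_one] at this
      exact Dm_inj this
  · rintro x ⟨a, ha, hx | hx⟩
    · exact diag_mem_S ha hx
    · have hy : ((w⁻¹ * x : SU2) : Matrix (Fin 2) (Fin 2) ℂ) = Dm a := by
        rw [coe_mul_SU2, coe_inv_SU2, w_coe, hx, star_Am, Am_mul_Am]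
        norm_num
      have hw : w ∈ S := Subgroup.subset_closure (Or.inl rfl)
      have := S.mul_mem hw (diag_mem_S ha hy)
      rwa [mul_inv_cancel_left] at this

/-- Entries of an element of SU(2) with vanishing off-diagonal entries. -/
lemma su2_diag_form {g : SU2} (hq : (g : Matrix (Fin 2) (Fin 2) ℂ) 0 1 = 0)
    (hr : (g : Matrix (Fin 2) (Fin 2) ℂ) 1 0 = 0) :
    (g : Matrix (Fin 2) (Fin 2) ℂ) = Dm ((g : Matrix (Fin 2) (Fin 2) ℂ) 0 0) ∧
      (starRingEnd ℂ) ((g : Matrix (Fin 2) (Fin 2) ℂ) 0 0) * (g : Matrix (Fin 2) (Fin 2) ℂ) 0 0 = 1 := by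
  set M := (g : Matrix (Fin 2) (Fin 2) ℂ) with hM
  have hdet : M.det = 1 := g.2.2
  rw [Matrix.det_fin_two, hq, hr] at hdet
  have hu : star M * M = 1 := g.2.1.1
  have h00 : (star M * M) 0 0 = (1 : Matrix (Fin 2) (Fin 2) ℂ) 0 0 := by rw [hu]
  rw [Matrix.mul_apply, Fin.sum_univ_two, Matrix.star_eq_conjTranspose,
    Matrix.conjTranspose_apply, Matrix.conjTranspose_apply, hr] at h00
  simp only [Matrix.one_apply_eq, Complex.star_def, map_zero, zero_mul, add_zero] at h00
  have hs : M 1 1 = (starRingEnd ℂ) (M 0 0) := by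
    simp only [mul_zero, sub_zero] at hdet
    linear_combination (starRingEnd ℂ) (M 0 0) * hdet - M 1 1 * h00
  constructor
  · ext i j
    fin_cases i <;> fin_cases j <;> simp [Dm, hq, hr, hs]
  · exact h00

lemma Dm_mem_SU2 {a : ℂ} (h : (starRingEnd ℂ) a * a = 1) :
    Dm a ∈ Matrix.specialUnitaryGroup (Fin 2) ℂ := by
  have hh := mem_su2 a 0 (by rw [map_zero, mul_zero, add_zero]; linear_combination h)
  simp only [map_zero, neg_zero] at hh
  exact hh

lemma Dm_conj_rel {c d : ℂ} {M : Matrix (Fin 2) (Fin 2) ℂ} (h : Dm c * M = M * Dm d) :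
    c * M 0 0 = M 0 0 * d ∧ c * M 0 1 = M 0 1 * (starRingEnd ℂ) d ∧
      (starRingEnd ℂ) c * M 1 0 = M 1 0 * d ∧
      (starRingEnd ℂ) c * M 1 1 = M 1 1 * (starRingEnd ℂ) d := by
  have e00 := congrFun (congrFun h 0) 0
  have e01 := congrFun (congrFun h 0) 1
  have e10 := congrFun (congrFun h 1) 0
  have e11 := congrFun (congrFun h 1) 1
  simp [Dm, Matrix.mul_apply, Fin.sum_univ_two] at e00 e01 e10 e11
  exact ⟨by linear_combination e00, by linear_combination e01,
    by linear_combination e10, by linear_combination e11⟩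

lemma hI : (1 : ℂ) + I ≠ 0 := by
  intro h
  have := congrArg Complex.im h
  simp at this

lemma hI' : (1 : ℂ) - I ≠ 0 := by
  intro h
  have := congrArg Complex.im h
  simp at this

/-- An element of the normalizer of `S` with vanishing off-diagonal entries is in `S`. -/
lemma normalizer_diag_mem {g : SU2} (hg : g ∈ Subgroup.normalizer (S : Set SU2))
    (hq : (g : Matrix (Fin 2) (Fin 2) ℂ) 0 1 = 0)
    (hr : (g : Matrix (Fin 2) (Fin 2) ℂ) 1 0 = 0) : g ∈ S := by
  obtain ⟨hform, hnorm⟩ := su2_diag_form hq hr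
  set p := (g : Matrix (Fin 2) (Fin 2) ℂ) 0 0 with hp
  have hw : w ∈ S := Subgroup.subset_closure (Or.inl rfl)
  have hX : g * w * g⁻¹ ∈ S := (Subgroup.mem_normalizer_iff.mp hg w).mp hw
  rw [S_eq_K] at hX
  obtain ⟨b, hb, hXb | hXb⟩ := hX
  all_goals
    rw [coe_mul_SU2, coe_mul_SU2, coe_inv_SU2, hform, w_coe, star_Dm,
      Dm_mul_Am, Am_mul_Dm] at hXb
  · exact absurd hXb.symm (Dm_ne_Am (rt2_ne_zero hb))
  · have hbp : b = (starRingEnd ℂ) p * 1 * (starRingEnd ℂ) p := Am_inj hXb.symm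
    have hrtp : rt2 p := by
      have h2 : rt2 (((starRingEnd ℂ) p) ^ 2) := by
        rw [show ((starRingEnd ℂ) p) ^ 2 = (starRingEnd ℂ) p * 1 * (starRingEnd ℂ) p by ring,
          ← hbp]
        exact hb
      have h3 := rt2_conj (rt2_of_sq h2)
      rwa [Complex.conj_conj] at h3
    rw [S_eq_K]
    exact ⟨p, hrtp, Or.inl hform⟩

/-- The normalizer of the maximal discrete 2-toral subgroup `S` in `SU(2)` equals `S`. -/
theorem normalizer_S_eq_S : Subgroup.normalizer (S : Set SU2) = S := by
  apply le_antisymm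
  · intro g hg
    set M := (g : Matrix (Fin 2) (Fin 2) ℂ) with hM
    -- the order-8 diagonal element t
    set a₀ : ℂ := (1 + I) / (Real.sqrt 2 : ℝ) with ha₀
    have hs2 : ((Real.sqrt 2 : ℝ) : ℂ) ^ 2 = 2 := by
      norm_cast
      rw [Real.sq_sqrt (by norm_num)]
    have hs2ne : ((Real.sqrt 2 : ℝ) : ℂ) ≠ 0 := by
      intro h
      rw [h] at hs2
      norm_num at hs2
    have ha₀sq : a₀ ^ 2 = I := by
      rw [ha₀, div_pow, hs2]
      have h2 : (1 + I) ^ 2 = 2 * I := by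
        rw [add_sq, Complex.I_sq]; ring
      rw [h2]
      field_simp
    have ha₀rt : rt2 a₀ := ⟨3, by
      show a₀ ^ 8 = 1
      rw [show (8 : ℕ) = 2 * 4 by norm_num, pow_mul, ha₀sq]
      norm_num [Complex.I_pow_four]⟩
    have ha₀ne : a₀ - (starRingEnd ℂ) a₀ ≠ 0 := by
      have hc : (starRingEnd ℂ) a₀ = (1 - I) / (Real.sqrt 2 : ℝ) := by
        rw [ha₀, map_div₀, Complex.conj_ofReal]
        simp [sub_eq_add_neg]
      have h2 : a₀ - (starRingEnd ℂ) a₀ = 2 * I / ((Real.sqrt 2 : ℝ) : ℂ) := by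
        rw [ha₀, hc]; ring
      rw [h2]
      intro h
      rw [div_eq_zero_iff] at h
      rcases h with h | h
      · simp [Complex.I_ne_zero] at h
      · exact hs2ne h
    set t : SU2 := ⟨Dm a₀, Dm_mem_SU2 (rt2_norm ha₀rt)⟩ with hts
    have ht : t ∈ S := diag_mem_S ha₀rt rfl
    have hdet : M.det = 1 := g.2.2
    rw [Matrix.det_fin_two] at hdet
    have hX : g * t * g⁻¹ ∈ S := (Subgroup.mem_normalizer_iff.mp hg t).mp ht
    rw [S_eq_K] at hX
    obtain ⟨c, hc, hXc | hXc⟩ := hX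
    · -- conjugate is diagonal
      have hrel : (g * t * g⁻¹) * g = g * t := by group
      have hrel' : Dm c * M = M * Dm a₀ := by
        have h2 := congrArg Subtype.val hrel
        rw [coe_mul_SU2 (g * t * g⁻¹) g, hXc, coe_mul_SU2 g t] at h2
        exact h2
      obtain ⟨e00, e01, e10, e11⟩ := Dm_conj_rel hrel'
      by_cases hp : M 0 0 = 0
      · -- g is antidiagonal
        have hq : M 0 1 ≠ 0 := by
          intro h
          rw [hp, h] at hdet
          simp at hdet
        have hcq : c = (starRingEnd ℂ) a₀ := by
          apply mul_right_cancel₀ hq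
          linear_combination e01
        have hs0 : M 1 1 = 0 := by
          rw [hcq, Complex.conj_conj] at e11
          have h2 : (a₀ - (starRingEnd ℂ) a₀) * M 1 1 = 0 := by linear_combination e11
          exact (mul_eq_zero.mp h2).resolve_left ha₀ne
        have hwn : w ∈ Subgroup.normalizer (S : Set SU2) := Subgroup.le_normalizer (Subgroup.subset_closure (Or.inl rfl))
        have hgn : w⁻¹ * g ∈ Subgroup.normalizer (S : Set SU2) := Subgroup.mul_mem _ (Subgroup.inv_mem _ hwn) hg
        have hc01 : ((w⁻¹ * g : SU2) : Matrix (Fin 2) (Fin 2) ℂ) 0 1 = 0 := by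
          rw [coe_mul_SU2, coe_inv_SU2, w_coe, star_Am]
          simp [Am, Matrix.mul_apply, Fin.sum_univ_two, ← hM, hs0]
        have hc10 : ((w⁻¹ * g : SU2) : Matrix (Fin 2) (Fin 2) ℂ) 1 0 = 0 := by
          rw [coe_mul_SU2, coe_inv_SU2, w_coe, star_Am]
          simp [Am, Matrix.mul_apply, Fin.sum_univ_two, ← hM, hp]
        have hmem := normalizer_diag_mem hgn hc01 hc10
        have : w * (w⁻¹ * g) ∈ S :=
          Subgroup.mul_mem _ (Subgroup.subset_closure (Or.inl rfl)) hmem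
        rwa [mul_inv_cancel_left] at this
      · -- g is diagonal
        have hca : c = a₀ := by
          apply mul_right_cancel₀ hp
          linear_combination e00
        have hq0 : M 0 1 = 0 := by
          rw [hca] at e01
          have h2 : (a₀ - (starRingEnd ℂ) a₀) * M 0 1 = 0 := by linear_combination e01
          exact (mul_eq_zero.mp h2).resolve_left ha₀ne
        have hr0 : M 1 0 = 0 := by
          rw [hca] at e10
          have h2 : (a₀ - (starRingEnd ℂ) a₀) * M 1 0 = 0 := by linear_combination -e10
          exact (mul_eq_zero.mp h2).resolve_left ha₀ne
        exact normalizer_diag_mem hg hq0 hr0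
    · -- conjugate is antidiagonal: contradiction
      exfalso
      have hrel : ((g * t * g⁻¹) * (g * t * g⁻¹)) * g = g * (t * t) := by group
      have hrel' : Am c * Am c * M = M * (Dm a₀ * Dm a₀) := by
        have h2 := congrArg Subtype.val hrel
        rw [coe_mul_SU2 (g * t * g⁻¹ * (g * t * g⁻¹)) g,
          coe_mul_SU2 (g * t * g⁻¹) (g * t * g⁻¹), hXc,
          coe_mul_SU2 g (t * t), coe_mul_SU2 t t] at h2
        exact h2
      have hnc := rt2_norm hc
      rw [Am_mul_Am, Dm_mul_Dm, show -((starRingEnd ℂ) c) * c = -1 by linear_combination -hnc,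
        show a₀ * a₀ = a₀ ^ 2 by ring, ha₀sq] at hrel'
      obtain ⟨f00, f01, _, _⟩ := Dm_conj_rel hrel'
      have hm00 : M 0 0 = 0 := by
        have h2 : M 0 0 * (1 + I) = 0 := by linear_combination -f00
        exact (mul_eq_zero.mp h2).resolve_right hI
      have hm01 : M 0 1 = 0 := by
        rw [Complex.conj_I] at f01
        have h2 : M 0 1 * (1 - I) = 0 := by linear_combination -f01
        exact (mul_eq_zero.mp h2).resolve_right hI'
      rw [hm00, hm01] at hdet
      simp at hdet
  · exact Subgroup.le_normalizer
end
end

section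
/- The normalizer of Q in S, i.e. the subgroup of those elements x of S with x·Q·x⁻¹ = Q, is isomorphic to the generalized quaternion group Q₁₆ of order 16 (the group with presentation ⟨a, b | a⁸ = 1, a⁴ = b², b⁻¹ab = a⁻¹⟩); it is generated by diag(e^{iπ/4}, e^{−iπ/4}) and w. -/
open Matrix Complex

noncomputable section

/-- The element `diag (e^{iπ/4}, e^{-iπ/4})` of `SU(2)`. -/
def zeta : SU2 :=
  ⟨!![Complex.exp ((Real.pi : ℂ) * Complex.I / 4), 0; 0,
      Complex.exp (-((Real.pi : ℂ) * Complex.I / 4))], by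
    have hconj : (starRingEnd ℂ) (Complex.exp ((Real.pi : ℂ) * Complex.I / 4)) =
        Complex.exp (-((Real.pi : ℂ) * Complex.I / 4)) := by
      rw [← Complex.exp_conj]
      congr 1
      have h4 : (starRingEnd ℂ) (4 : ℂ) = 4 := map_ofNat _ 4
      simp [map_div₀, Complex.conj_ofReal, h4]
      ring
    have h := mem_su2 (Complex.exp ((Real.pi : ℂ) * Complex.I / 4)) 0 (by
      rw [hconj, ← Complex.exp_add, add_neg_cancel, Complex.exp_zero]
      simp)
    rw [hconj] at h
    simpa using h⟩

-- appended after the preamble, before main theorem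
namespace SUQ

noncomputable def Dm (a : ℂ) : Matrix (Fin 2) (Fin 2) ℂ := !![a, 0; 0, (starRingEnd ℂ) a]
noncomputable def ADm (a : ℂ) : Matrix (Fin 2) (Fin 2) ℂ := !![0, a; -((starRingEnd ℂ) a), 0]

lemma Dm_mul_Dm (a b : ℂ) : Dm a * Dm b = Dm (a * b) := by
  simp [Dm, Matrix.mul_fin_two, _root_.map_mul]

lemma Dm_mul_ADm (a b : ℂ) : Dm a * ADm b = ADm (a * b) := by
  simp [Dm, ADm, Matrix.mul_fin_two, _root_.map_mul]

lemma ADm_mul_Dm (a b : ℂ) : ADm a * Dm b = ADm (a * (starRingEnd ℂ) b) := by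
  simp [Dm, ADm, Matrix.mul_fin_two, _root_.map_mul, mul_comm]

lemma ADm_mul_ADm (a b : ℂ) : ADm a * ADm b = Dm (-(a * (starRingEnd ℂ) b)) := by
  simp [Dm, ADm, Matrix.mul_fin_two, _root_.map_mul, mul_comm]

lemma star_Dm (a : ℂ) : star (Dm a) = Dm ((starRingEnd ℂ) a) := by
  ext i j
  fin_cases i <;> fin_cases j <;>
    simp [Dm, Matrix.star_eq_conjTranspose, Matrix.conjTranspose_apply]

lemma star_ADm (a : ℂ) : star (ADm a) = ADm (-a) := by
  ext i j
  fin_cases i <;> fin_cases j <;>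
    simp [ADm, Matrix.star_eq_conjTranspose, Matrix.conjTranspose_apply]

lemma Dm_one : Dm 1 = 1 := by
  ext i j
  fin_cases i <;> fin_cases j <;> simp [Dm, Matrix.one_apply]

lemma Dm_pow (a : ℂ) (n : ℕ) : Dm a ^ n = Dm (a ^ n) := by
  induction n with
  | zero => simp [Dm_one]
  | succ k ih => rw [pow_succ, pow_succ, ih, Dm_mul_Dm]

lemma Dm_eq_one_iff (a : ℂ) : Dm a = 1 ↔ a = 1 := by
  constructor
  · intro h
    have := congrFun (congrFun h 0) 0
    simpa [Dm, Matrix.one_apply] using this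
  · rintro rfl; exact Dm_one

lemma Dm_ne_ADm (a b : ℂ) (ha : a ≠ 0) : Dm a ≠ ADm b := by
  intro h
  have := congrFun (congrFun h 0) 0
  simp [Dm, ADm] at this
  exact ha this

lemma Dm_inj {a b : ℂ} (h : Dm a = Dm b) : a = b := by
  have := congrFun (congrFun h 0) 0
  simpa [Dm] using this

end SUQ

namespace SUQ

noncomputable abbrev z0 : ℂ := Complex.exp ((Real.pi : ℂ) * Complex.I / 4)

lemma coe_mul (x y : SU2) : ((x * y : SU2) : Matrix (Fin 2) (Fin 2) ℂ) = x.1 * y.1 := rfl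
lemma coe_one : ((1 : SU2) : Matrix (Fin 2) (Fin 2) ℂ) = 1 := rfl
lemma coe_inv (x : SU2) : ((x⁻¹ : SU2) : Matrix (Fin 2) (Fin 2) ℂ) = star x.1 := rfl
lemma coe_pow (x : SU2) (n : ℕ) : ((x ^ n : SU2) : Matrix (Fin 2) (Fin 2) ℂ) = x.1 ^ n := by
  induction n with
  | zero => rfl
  | succ k ih => rw [pow_succ, pow_succ, ← ih]; rfl

lemma w_coe : (w : Matrix (Fin 2) (Fin 2) ℂ) = ADm 1 := by
  simp [w, ADm]

lemma jmat_coe : (jmat : Matrix (Fin 2) (Fin 2) ℂ) = Dm Complex.I := by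
  simp [jmat, Dm, Complex.conj_I]

lemma conj_z0 : (starRingEnd ℂ) z0 = Complex.exp (-((Real.pi : ℂ) * Complex.I / 4)) := by
  rw [← Complex.exp_conj]
  congr 1
  have h4 : (starRingEnd ℂ) (4 : ℂ) = 4 := map_ofNat _ 4
  simp [map_div₀, Complex.conj_ofReal, h4]
  ring

lemma zeta_coe : (zeta : Matrix (Fin 2) (Fin 2) ℂ) = Dm z0 := by
  simp only [zeta, Dm, conj_z0]

lemma z0_pow8 : z0 ^ 8 = 1 := by
  rw [← Complex.exp_nat_mul]
  rw [show ((8 : ℕ) : ℂ) * ((Real.pi : ℂ) * Complex.I / 4) = 2 * (Real.pi : ℂ) * Complex.I by push_cast; ring]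
  exact Complex.exp_two_pi_mul_I

lemma z0_ne_zero : z0 ≠ 0 := Complex.exp_ne_zero _

lemma isPrimitiveRoot_z0 : IsPrimitiveRoot z0 8 := by
  have := Complex.isPrimitiveRoot_exp 8 (by norm_num)
  convert this using 2
  push_cast
  ring

lemma zeta_pow_coe (n : ℕ) : ((zeta ^ n : SU2) : Matrix (Fin 2) (Fin 2) ℂ) = Dm (z0 ^ n) := by
  rw [coe_pow, zeta_coe, Dm_pow]

lemma zeta_pow8 : zeta ^ 8 = 1 := by
  apply Subtype.ext
  rw [zeta_pow_coe, z0_pow8, Dm_one]; rfl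

end SUQ

namespace SUQ

/-- Structural description of elements of `Q`. -/
lemma Q_struct (x : SU2) (hx : x ∈ Q) :
    ∃ c : ℂ, c ^ 4 = 1 ∧ (x.1 = Dm c ∨ x.1 = ADm c) := by
  induction hx using Subgroup.closure_induction with
  | mem y hy =>
    rcases hy with rfl | rfl
    · exact ⟨1, by norm_num, Or.inr w_coe⟩
    · refine ⟨Complex.I, ?_, Or.inl jmat_coe⟩
      rw [show (4 : ℕ) = 2 * 2 from rfl, pow_mul, Complex.I_sq]; norm_num
  | one => exact ⟨1, by norm_num, Or.inl (by rw [Dm_one]; rfl)⟩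
  | mul x y hx hy ihx ihy =>
    obtain ⟨c, hc, hcx⟩ := ihx
    obtain ⟨d, hd, hdy⟩ := ihy
    rcases hcx with h1 | h1 <;> rcases hdy with h2 | h2
    · exact ⟨c * d, by rw [mul_pow, hc, hd, one_mul], Or.inl (by
        rw [coe_mul, h1, h2, Dm_mul_Dm])⟩
    · exact ⟨c * d, by rw [mul_pow, hc, hd, one_mul], Or.inr (by
        rw [coe_mul, h1, h2, Dm_mul_ADm])⟩
    · exact ⟨c * (starRingEnd ℂ) d, by
        rw [mul_pow, hc, ← map_pow, hd, one_mul, _root_.map_one], Or.inr (by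
        rw [coe_mul, h1, h2, ADm_mul_Dm])⟩
    · exact ⟨-(c * (starRingEnd ℂ) d), by
        rw [neg_pow, mul_pow, hc, ← map_pow, hd, one_mul, _root_.map_one]; norm_num, Or.inl (by
        rw [coe_mul, h1, h2, ADm_mul_ADm])⟩
  | inv x hx ihx =>
    obtain ⟨c, hc, hcx⟩ := ihx
    rcases hcx with h1 | h1
    · exact ⟨(starRingEnd ℂ) c, by rw [← map_pow, hc, _root_.map_one], Or.inl (by
        rw [coe_inv, h1, star_Dm])⟩
    · exact ⟨-c, by rw [neg_pow, hc]; norm_num, Or.inr (by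
        rw [coe_inv, h1, star_ADm])⟩

lemma w_mem_Q : w ∈ Q := Subgroup.subset_closure (by simp)
lemma jmat_mem_Q : jmat ∈ Q := Subgroup.subset_closure (by simp)

/-- Conversely: any `Dm c` or `ADm c` with `c^4 = 1` is in `Q`. -/
lemma mem_Q_of (x : SU2) (c : ℂ) (hc : c ^ 4 = 1)
    (hx : x.1 = Dm c ∨ x.1 = ADm c) : x ∈ Q := by
  have hcases : c = 1 ∨ c = -1 ∨ c = Complex.I ∨ c = -Complex.I := by
    have h0 : (c - 1) * ((c + 1) * ((c - Complex.I) * (c + Complex.I))) = 0 := by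
      linear_combination hc - (c ^ 2 - 1) * Complex.I_sq
    rcases mul_eq_zero.mp h0 with h | h
    · exact Or.inl (by linear_combination h)
    rcases mul_eq_zero.mp h with h | h
    · exact Or.inr (Or.inl (by linear_combination h))
    rcases mul_eq_zero.mp h with h | h
    · exact Or.inr (Or.inr (Or.inl (by linear_combination h)))
    · exact Or.inr (Or.inr (Or.inr (by linear_combination h)))
  -- membership of the diagonal part
  have hdiag : ∀ y : SU2, y.1 = Dm c → y ∈ Q := by
    intro y hy
    rcases hcases with rfl | rfl | rfl | rfl
    · have : y = 1 := Subtype.ext (by rw [hy, Dm_one]; rfl)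
      rw [this]; exact one_mem _
    · have : y = jmat * jmat := Subtype.ext (by
        rw [hy, coe_mul, jmat_coe, Dm_mul_Dm, Complex.I_mul_I])
      rw [this]; exact mul_mem jmat_mem_Q jmat_mem_Q
    · have : y = jmat := Subtype.ext (by rw [hy, jmat_coe])
      rw [this]; exact jmat_mem_Q
    · have : y = jmat⁻¹ := Subtype.ext (by
        rw [hy, coe_inv, jmat_coe, star_Dm, Complex.conj_I])
      rw [this]; exact inv_mem jmat_mem_Q
  rcases hx with h | h
  · exact hdiag x h
  · -- x = (diag part) * w
    have hxd : ∃ y : SU2, y.1 = Dm c ∧ x = y * w := by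
      refine ⟨x * w⁻¹, ?_, by group⟩
      rw [coe_mul, coe_inv, h, w_coe, star_ADm, ADm_mul_ADm]
      rw [map_neg, _root_.map_one, mul_neg, mul_one, neg_neg]
    obtain ⟨y, hy, rfl⟩ := hxd
    exact mul_mem (hdiag y hy) w_mem_Q

end SUQ

namespace SUQ

lemma two_pow_mul {a b : ℂ} {n m : ℕ} (ha : a ^ 2 ^ n = 1) (hb : b ^ 2 ^ m = 1) :
    (a * b) ^ 2 ^ (n + m) = 1 := by
  rw [mul_pow, pow_add, pow_mul, ha, one_pow, one_mul, mul_comm (2 ^ n), pow_mul, hb, one_pow]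

lemma two_pow_conj {a : ℂ} {n : ℕ} (ha : a ^ 2 ^ n = 1) :
    ((starRingEnd ℂ) a) ^ 2 ^ n = 1 := by rw [← map_pow, ha, _root_.map_one]

lemma two_pow_neg {a : ℂ} {n : ℕ} (ha : a ^ 2 ^ n = 1) : (-a) ^ 2 ^ (n + 1) = 1 := by
  calc (-a) ^ 2 ^ (n + 1) = (-a) ^ (2 * 2 ^ n) := by rw [pow_succ']
    _ = ((-a) ^ 2) ^ 2 ^ n := by rw [pow_mul]
    _ = (a ^ 2) ^ 2 ^ n := by rw [neg_sq]
    _ = (a ^ 2 ^ n) ^ 2 := by rw [← pow_mul, mul_comm, pow_mul]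
    _ = 1 := by rw [ha, one_pow]

/-- Structural description of elements of `S`. -/
lemma S_struct (x : SU2) (hx : x ∈ S) :
    ∃ (a : ℂ) (n : ℕ), a ^ 2 ^ n = 1 ∧ (x.1 = Dm a ∨ x.1 = ADm a) := by
  induction hx using Subgroup.closure_induction with
  | mem y hy =>
    rcases hy with rfl | ⟨⟨a, _, hay⟩, n, hn⟩
    · exact ⟨1, 0, by norm_num, Or.inr w_coe⟩
    · refine ⟨a, n, ?_, Or.inl hay⟩
      have hay' : (y : Matrix (Fin 2) (Fin 2) ℂ) = Dm a := hay
      have : ((y ^ 2 ^ n : SU2) : Matrix (Fin 2) (Fin 2) ℂ) = 1 := by rw [hn]; rfl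
      rw [coe_pow, hay', Dm_pow] at this
      exact (Dm_eq_one_iff _).mp this
  | one => exact ⟨1, 0, by norm_num, Or.inl (by rw [Dm_one]; rfl)⟩
  | mul x y hx hy ihx ihy =>
    obtain ⟨a, n, ha, hax⟩ := ihx
    obtain ⟨b, m, hb, hby⟩ := ihy
    rcases hax with h1 | h1 <;> rcases hby with h2 | h2
    · exact ⟨a * b, n + m, two_pow_mul ha hb, Or.inl (by rw [coe_mul, h1, h2, Dm_mul_Dm])⟩
    · exact ⟨a * b, n + m, two_pow_mul ha hb, Or.inr (by rw [coe_mul, h1, h2, Dm_mul_ADm])⟩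
    · exact ⟨a * (starRingEnd ℂ) b, n + m, two_pow_mul ha (two_pow_conj hb),
        Or.inr (by rw [coe_mul, h1, h2, ADm_mul_Dm])⟩
    · exact ⟨-(a * (starRingEnd ℂ) b), n + m + 1,
        two_pow_neg (two_pow_mul ha (two_pow_conj hb)),
        Or.inl (by rw [coe_mul, h1, h2, ADm_mul_ADm])⟩
  | inv x hx ihx =>
    obtain ⟨a, n, ha, hax⟩ := ihx
    rcases hax with h1 | h1
    · exact ⟨(starRingEnd ℂ) a, n, two_pow_conj ha, Or.inl (by rw [coe_inv, h1, star_Dm])⟩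
    · exact ⟨-a, n + 1, two_pow_neg ha, Or.inr (by rw [coe_inv, h1, star_ADm])⟩

lemma det_of_Dm (z : SU2) (a : ℂ) (hz : z.1 = Dm a) : a * (starRingEnd ℂ) a = 1 := by
  have hdet : (z.1).det = 1 := z.2.2
  rw [hz, Dm, Matrix.det_fin_two_of] at hdet
  linear_combination hdet

/-- Conjugation by a diagonal element with `a ^ 8 = 1` maps `Q` into `Q`. -/
lemma conj_maps_Q (z : SU2) (a : ℂ) (ha : a ^ 8 = 1) (hz : z.1 = Dm a) :
    ∀ h ∈ Q, z * h * z⁻¹ ∈ Q := by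
  intro h hh
  have hdet := det_of_Dm z a hz
  have hzinv : (z⁻¹).1 = Dm ((starRingEnd ℂ) a) := by rw [coe_inv, hz, star_Dm]
  obtain ⟨c, hc, hcm | hcm⟩ := Q_struct h hh
  · refine mem_Q_of _ c hc (Or.inl ?_)
    rw [coe_mul, coe_mul, hz, hcm, hzinv, Dm_mul_Dm, Dm_mul_Dm]
    exact congrArg Dm (by linear_combination c * hdet)
  · refine mem_Q_of _ (a * a * c) (by
      rw [show a * a * c = a ^ 2 * c by ring, mul_pow, ← pow_mul, show 2 * 4 = 8 from rfl,
        ha, one_mul, hc]) (Or.inr ?_)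
    rw [coe_mul, coe_mul, hz, hcm, hzinv, Dm_mul_ADm, ADm_mul_Dm, Complex.conj_conj]
    exact congrArg ADm (by ring)

lemma mem_normalizer_of_Dm (z : SU2) (a : ℂ) (ha : a ^ 8 = 1) (hz : z.1 = Dm a) :
    z ∈ Subgroup.normalizer (Q : Set SU2) := by
  rw [Subgroup.mem_normalizer_iff]
  intro h
  constructor
  · intro hh; exact conj_maps_Q z a ha hz h hh
  · intro hh
    have hzinv : (z⁻¹).1 = Dm ((starRingEnd ℂ) a) := by rw [coe_inv, hz, star_Dm]
    have ha' : ((starRingEnd ℂ) a) ^ 8 = 1 := by rw [← map_pow, ha, _root_.map_one]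
    have := conj_maps_Q z⁻¹ _ ha' hzinv _ hh
    simpa [mul_assoc] using this

lemma zeta_mem_normalizer : zeta ∈ Subgroup.normalizer (Q : Set SU2) :=
  mem_normalizer_of_Dm zeta z0 z0_pow8 zeta_coe

lemma w_mem_normalizer : w ∈ Subgroup.normalizer (Q : Set SU2) := Subgroup.le_normalizer w_mem_Q

lemma w_mem_S : w ∈ S := Subgroup.subset_closure (Or.inl rfl)

lemma zeta_mem_S : zeta ∈ S := by
  apply Subgroup.subset_closure
  right
  refine ⟨⟨z0, ?_, by rw [zeta_coe]; rfl⟩, 3, by rw [show (2:ℕ)^3 = 8 from rfl]; exact zeta_pow8⟩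
  have : ‖z0‖ = Real.exp ((Real.pi : ℂ) * Complex.I / 4).re := Complex.norm_exp _
  rw [this]
  simp

end SUQ

namespace SUQ

lemma ADm_inj {a b : ℂ} (h : ADm a = ADm b) : a = b := by
  have := congrFun (congrFun h 0) 1
  simpa [ADm] using this

/-- A diagonal element of the normalizer of `Q` has `a ^ 8 = 1`. -/
lemma pow8_of_normalizer (z : SU2) (a : ℂ) (hz : z.1 = Dm a) (hn : z ∈ Subgroup.normalizer (Q : Set SU2)) :
    a ^ 8 = 1 := by
  have hdet := det_of_Dm z a hz
  have hw : z * w * z⁻¹ ∈ Q := (Subgroup.mem_normalizer_iff.mp hn w).mp w_mem_Q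
  have hcoe : ((z * w * z⁻¹ : SU2) : Matrix (Fin 2) (Fin 2) ℂ) = ADm (a * a) := by
    rw [coe_mul, coe_mul, coe_inv, hz, w_coe, star_Dm, Dm_mul_ADm, ADm_mul_Dm,
      Complex.conj_conj, mul_one]
  obtain ⟨c, hc, hcm | hcm⟩ := Q_struct _ hw
  · exfalso
    have hc0 : c ≠ 0 := by
      intro h0; rw [h0] at hc; simp at hc
    exact Dm_ne_ADm c (a * a) hc0 (hcm.symm.trans hcoe)
  · have : a * a = c := ADm_inj (hcoe.symm.trans hcm)
    calc a ^ 8 = (a * a) ^ 4 := by ring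
      _ = c ^ 4 := by rw [this]
      _ = 1 := hc

/-- A diagonal element of the normalizer of `Q` lies in `closure {zeta, w}`. -/
lemma diag_mem_closure (z : SU2) (a : ℂ) (hz : z.1 = Dm a) (hn : z ∈ Subgroup.normalizer (Q : Set SU2)) :
    z ∈ Subgroup.closure {zeta, w} := by
  have ha8 : a ^ 8 = 1 := pow8_of_normalizer z a hz hn
  obtain ⟨k, -, hk⟩ := isPrimitiveRoot_z0.eq_pow_of_pow_eq_one ha8
  have : z = zeta ^ k := Subtype.ext (by rw [zeta_pow_coe, hk, hz])
  rw [this]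
  have hzc : zeta ∈ Subgroup.closure ({zeta, w} : Set SU2) :=
    Subgroup.subset_closure (Set.mem_insert _ _)
  exact Subgroup.pow_mem _ hzc k

lemma w_mem_closure : w ∈ Subgroup.closure ({zeta, w} : Set SU2) :=
  Subgroup.subset_closure (Or.inr rfl)

lemma inf_le_closure : S ⊓ Subgroup.normalizer (Q : Set SU2) ≤ Subgroup.closure {zeta, w} := by
  rintro x ⟨hxS, hxN⟩
  obtain ⟨a, n, -, hxm | hxm⟩ := S_struct x hxS
  · exact diag_mem_closure x a hxm hxN
  · have hyN : w⁻¹ * x ∈ Subgroup.normalizer (Q : Set SU2) := mul_mem (inv_mem w_mem_normalizer) hxN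
    have hym : ((w⁻¹ * x : SU2) : Matrix (Fin 2) (Fin 2) ℂ) = Dm ((starRingEnd ℂ) a) := by
      rw [coe_mul, coe_inv, w_coe, star_ADm, hxm, ADm_mul_ADm]
      exact congrArg Dm (by ring)
    have hy := diag_mem_closure _ _ hym hyN
    have : x = w * (w⁻¹ * x) := by group
    rw [this]
    exact mul_mem w_mem_closure hy

lemma closure_le_inf : Subgroup.closure ({zeta, w} : Set SU2) ≤ S ⊓ Subgroup.normalizer (Q : Set SU2) := by
  rw [Subgroup.closure_le]
  rintro x (rfl | rfl)
  · exact ⟨zeta_mem_S, zeta_mem_normalizer⟩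
  · exact ⟨w_mem_S, w_mem_normalizer⟩

lemma inf_eq_closure : S ⊓ Subgroup.normalizer (Q : Set SU2) = Subgroup.closure {zeta, w} :=
  le_antisymm inf_le_closure closure_le_inf

end SUQ

namespace SUQ

lemma zeta_pow_mod (m : ℕ) : zeta ^ m = zeta ^ (m % 8) := by
  conv_lhs => rw [← Nat.div_add_mod m 8]
  rw [pow_add, pow_mul, zeta_pow8, one_pow, one_mul]

lemma val_cast (i : ZMod 8) : ((i.val : ℕ) : ZMod 8) = i := by
  simp [ZMod.natCast_val, ZMod.cast_id]

lemma zeta_pow_eq (m : ℕ) (k : ZMod 8) (h : (m : ZMod 8) = k) :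
    zeta ^ m = zeta ^ k.val := by
  have hm : m % 8 = k.val := by rw [← ZMod.val_natCast, h]
  rw [zeta_pow_mod, hm]

lemma zeta_mul_w : zeta * w = w * zeta⁻¹ := by
  apply Subtype.ext
  rw [coe_mul, coe_mul, coe_inv, zeta_coe, w_coe, star_Dm, Dm_mul_ADm, ADm_mul_Dm,
    Complex.conj_conj, mul_one, one_mul]

lemma zeta_inv_eq : zeta⁻¹ = zeta ^ 7 := by
  apply inv_eq_of_mul_eq_one_right
  rw [← pow_succ', zeta_pow8]

lemma zeta_pow_mul_w (m : ℕ) : zeta ^ m * w = w * zeta ^ (7 * m) := by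
  have sc : SemiconjBy w zeta⁻¹ zeta := by
    unfold SemiconjBy
    rw [← zeta_mul_w]
  have := (sc.pow_right m).eq
  rw [zeta_inv_eq, ← pow_mul, mul_comm 7 m] at this
  rw [← this, mul_comm 7 m]

lemma w_mul_w : w * w = zeta ^ 4 := by
  apply Subtype.ext
  rw [coe_mul, zeta_pow_coe, w_coe, ADm_mul_ADm, _root_.map_one, mul_one]
  have hz4 : z0 ^ 4 = -1 := by
    rw [← Complex.exp_nat_mul,
      show ((4 : ℕ) : ℂ) * ((Real.pi : ℂ) * Complex.I / 4) = (Real.pi : ℂ) * Complex.I by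
        push_cast; ring]
    exact Complex.exp_pi_mul_I
  rw [hz4]

noncomputable def fq : QuaternionGroup 4 → SU2
  | QuaternionGroup.a i => zeta ^ i.val
  | QuaternionGroup.xa i => w * zeta ^ i.val

lemma zmod8 : (8 : ZMod 8) = 0 := by decide

noncomputable def fhom : QuaternionGroup 4 →* SU2 where
  toFun := fq
  map_one' := by
    show zeta ^ (0 : ZMod 8).val = 1
    rw [show (0 : ZMod 8).val = 0 from rfl, pow_zero]
  map_mul' := by
    intro x y
    cases x with
    | a i =>
      cases y with
      | a j =>
        rw [QuaternionGroup.a_mul_a]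
        show zeta ^ (i + j).val = zeta ^ i.val * zeta ^ j.val
        rw [← pow_add]
        exact (zeta_pow_eq (i.val + j.val) (i + j) (by push_cast [val_cast]; ring)).symm
      | xa j =>
        rw [QuaternionGroup.a_mul_xa]
        show w * zeta ^ (j - i).val = zeta ^ i.val * (w * zeta ^ j.val)
        rw [← mul_assoc, zeta_pow_mul_w, mul_assoc, ← pow_add]
        congr 1
        exact (zeta_pow_eq (7 * i.val + j.val) (j - i) (by
          push_cast [val_cast]
          linear_combination (i : ZMod 8) * zmod8)).symm
    | xa i =>
      cases y with
      | a j =>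
        rw [QuaternionGroup.xa_mul_a]
        show w * zeta ^ (i + j).val = w * zeta ^ i.val * zeta ^ j.val
        rw [mul_assoc, ← pow_add]
        congr 1
        exact (zeta_pow_eq (i.val + j.val) (i + j) (by push_cast [val_cast]; ring)).symm
      | xa j =>
        rw [QuaternionGroup.xa_mul_xa]
        show zeta ^ (((4 : ℕ) : ZMod (2 * 4)) + j - i).val =
          w * zeta ^ i.val * (w * zeta ^ j.val)
        rw [mul_assoc, ← mul_assoc (zeta ^ i.val), zeta_pow_mul_w, ← mul_assoc,
          ← mul_assoc, w_mul_w, mul_assoc, ← pow_add, ← pow_add]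
        exact (zeta_pow_eq (4 + (7 * i.val + j.val)) (((4 : ℕ) : ZMod (2 * 4)) + j - i) (by
          push_cast [val_cast]
          linear_combination (i : ZMod 8) * zmod8)).symm

lemma val_inj {i j : ZMod 8} (h : i.val = j.val) : i = j := ZMod.val_injective 8 h

lemma zeta_pow_val_inj {i j : ZMod 8} (h : zeta ^ i.val = zeta ^ j.val) : i = j := by
  apply val_inj
  have hm : Dm (z0 ^ i.val) = Dm (z0 ^ j.val) := by
    rw [← zeta_pow_coe, ← zeta_pow_coe, h]
  exact isPrimitiveRoot_z0.pow_inj (ZMod.val_lt i) (ZMod.val_lt j) (Dm_inj hm)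

lemma fhom_inj : Function.Injective fhom := by
  intro x y h
  cases x with
  | a i =>
    cases y with
    | a j =>
      have : zeta ^ i.val = zeta ^ j.val := h
      rw [zeta_pow_val_inj this]
    | xa j =>
      exfalso
      have hm : ((zeta ^ i.val : SU2) : Matrix (Fin 2) (Fin 2) ℂ)
          = ((w * zeta ^ j.val : SU2) : Matrix (Fin 2) (Fin 2) ℂ) := by
        exact congrArg _ h
      rw [zeta_pow_coe, coe_mul, w_coe, zeta_pow_coe, ADm_mul_Dm, one_mul] at hm
      exact Dm_ne_ADm _ _ (pow_ne_zero _ z0_ne_zero) hm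
  | xa i =>
    cases y with
    | a j =>
      exfalso
      have hm : ((w * zeta ^ i.val : SU2) : Matrix (Fin 2) (Fin 2) ℂ)
          = ((zeta ^ j.val : SU2) : Matrix (Fin 2) (Fin 2) ℂ) := by
        exact congrArg _ h
      rw [zeta_pow_coe, coe_mul, w_coe, zeta_pow_coe, ADm_mul_Dm, one_mul] at hm
      exact Dm_ne_ADm _ _ (pow_ne_zero _ z0_ne_zero) hm.symm
    | xa j =>
      have h' : w * zeta ^ i.val = w * zeta ^ j.val := h
      rw [zeta_pow_val_inj (mul_left_cancel h')]

lemma fhom_range : fhom.range = Subgroup.closure ({zeta, w} : Set SU2) := by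
  apply le_antisymm
  · rintro x ⟨y, rfl⟩
    have hzc : zeta ∈ Subgroup.closure ({zeta, w} : Set SU2) :=
      Subgroup.subset_closure (Set.mem_insert _ _)
    cases y with
    | a i => exact Subgroup.pow_mem _ hzc i.val
    | xa i => exact mul_mem w_mem_closure (Subgroup.pow_mem _ hzc i.val)
  · rw [Subgroup.closure_le]
    rintro x (rfl | rfl)
    · refine ⟨QuaternionGroup.a 1, ?_⟩
      show zeta ^ (1 : ZMod 8).val = zeta
      rw [show (1 : ZMod 8).val = 1 from rfl, pow_one]
    · refine ⟨QuaternionGroup.xa 0, ?_⟩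
      show w * zeta ^ (0 : ZMod 8).val = w
      rw [show (0 : ZMod 8).val = 0 from rfl, pow_zero, mul_one]

end SUQ

/-- The normalizer of `Q` in `S` (the elements `x` of `S` with `x Q x⁻¹ = Q`) is generated
by `diag (e^{iπ/4}, e^{-iπ/4})` and `w`, and is isomorphic to the generalized quaternion
group `Q₁₆` of order `16`. -/
theorem normalizer_of_Q_in_S :
    S ⊓ Subgroup.normalizer (Q : Set SU2) = Subgroup.closure {zeta, w} ∧
    Nonempty (↥(S ⊓ Subgroup.normalizer (Q : Set SU2)) ≃* QuaternionGroup 4) := by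
  refine ⟨SUQ.inf_eq_closure, ?_⟩
  have h1 : S ⊓ Subgroup.normalizer (Q : Set SU2) = SUQ.fhom.range := by
    rw [SUQ.inf_eq_closure, SUQ.fhom_range]
  exact ⟨(MulEquiv.subgroupCongr h1).trans (MonoidHom.ofInjective SUQ.fhom_inj).symm⟩
end
end

section
/- There exists a surjective group homomorphism from SU(2) onto SO(3) whose kernel is {1, −1}, the subgroup consisting of the identity matrix and its negative; in other words, SO(3) is isomorphic to the quotient of SU(2) by its center {±1}. -/
open Matrix Complex

noncomputable section

/-- `SO(3)`, the special orthogonal group of `3 × 3` real matrices. -/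
abbrev SO3 := Matrix.specialOrthogonalGroup (Fin 3) ℝ

/-! ### Auxiliary development: the double cover -/

/-- The quaternion `(w, x, y, z)` as a `2 × 2` complex matrix. -/
def Qm (w x y z : ℝ) : Matrix (Fin 2) (Fin 2) ℂ :=
  !![⟨w, x⟩, ⟨y, z⟩; ⟨-y, z⟩, ⟨w, -x⟩]

/-- The rotation matrix associated to the quaternion `(w, x, y, z)`. -/
def rot (w x y z : ℝ) : Matrix (Fin 3) (Fin 3) ℝ :=
  !![w^2+x^2-y^2-z^2, 2*(x*y - w*z), 2*(x*z + w*y);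
     2*(x*y + w*z), w^2-x^2+y^2-z^2, 2*(y*z - w*x);
     2*(x*z - w*y), 2*(y*z + w*x), w^2-x^2-y^2+z^2]

lemma Qm_mul (w₁ x₁ y₁ z₁ w₂ x₂ y₂ z₂ : ℝ) :
    Qm w₁ x₁ y₁ z₁ * Qm w₂ x₂ y₂ z₂ =
    Qm (w₁*w₂ - x₁*x₂ - y₁*y₂ - z₁*z₂) (w₁*x₂ + x₁*w₂ + y₁*z₂ - z₁*y₂)
       (w₁*y₂ - x₁*z₂ + y₁*w₂ + z₁*x₂) (w₁*z₂ + x₁*y₂ - y₁*x₂ + z₁*w₂) := by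
  ext i j
  fin_cases i <;> fin_cases j <;>
    simp [Qm, Matrix.mul_apply, Fin.sum_univ_two, Complex.ext_iff] <;>
    constructor <;> ring

lemma rot_mul (w₁ x₁ y₁ z₁ w₂ x₂ y₂ z₂ : ℝ) :
    rot (w₁*w₂ - x₁*x₂ - y₁*y₂ - z₁*z₂) (w₁*x₂ + x₁*w₂ + y₁*z₂ - z₁*y₂)
       (w₁*y₂ - x₁*z₂ + y₁*w₂ + z₁*x₂) (w₁*z₂ + x₁*y₂ - y₁*x₂ + z₁*w₂) =
    rot w₁ x₁ y₁ z₁ * rot w₂ x₂ y₂ z₂ := by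
  ext i j
  fin_cases i <;> fin_cases j <;>
    simp [rot, Matrix.mul_apply, Fin.sum_univ_three] <;> ring

lemma rot_mem {w x y z : ℝ} (h : w^2+x^2+y^2+z^2 = 1) :
    rot w x y z ∈ Matrix.specialOrthogonalGroup (Fin 3) ℝ := by
  rw [Matrix.mem_specialOrthogonalGroup_iff]
  constructor
  · rw [Matrix.mem_orthogonalGroup_iff]
    ext i j
    fin_cases i <;> fin_cases j <;>
      simp [rot, Matrix.mul_apply, Fin.sum_univ_three, Matrix.star_eq_conjTranspose,
        Matrix.conjTranspose_apply, Matrix.transpose_apply, Matrix.vecHead, Matrix.vecTail,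
        Matrix.one_apply] <;>
      first
      | ring1
      | nlinarith [h]
  · show Matrix.det _ = 1
    rw [Matrix.det_fin_three]
    simp [rot]
    nlinarith [h, sq_nonneg (w^2+x^2+y^2+z^2)]

lemma Qm_mem {w x y z : ℝ} (h : w^2+x^2+y^2+z^2 = 1) :
    Qm w x y z ∈ Matrix.specialUnitaryGroup (Fin 2) ℂ := by
  have h1 : (⟨w,x⟩ : ℂ) * (starRingEnd ℂ) ⟨w,x⟩ + (⟨y,z⟩:ℂ) * (starRingEnd ℂ) ⟨y,z⟩ = 1 := by
    simp [Complex.ext_iff, Complex.mul_re, Complex.mul_im]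
    constructor <;> nlinarith [h]
  have h2 := mem_su2 ⟨w,x⟩ ⟨y,z⟩ h1
  have h3 : !![(⟨w,x⟩:ℂ), ⟨y,z⟩; -((starRingEnd ℂ) ⟨y,z⟩), (starRingEnd ℂ) ⟨w,x⟩] = Qm w x y z := by
    ext i j
    fin_cases i <;> fin_cases j <;> simp [Qm, Complex.ext_iff]
  rwa [h3] at h2

lemma su2_repr (A : SU2) : ∃ w x y z : ℝ, w^2+x^2+y^2+z^2 = 1 ∧ A.1 = Qm w x y z := by
  have hU : A.1 * star A.1 = 1 := A.2.1.2
  have hdet : A.1.det = 1 := A.2.2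
  have hinv : A.1⁻¹ = star A.1 := inv_eq_right_inv hU
  have hadj : A.1⁻¹ = A.1.adjugate := by rw [Matrix.inv_def, hdet]; simp
  have key : star A.1 = !![A.1 1 1, -A.1 0 1; -A.1 1 0, A.1 0 0] := by
    rw [← hinv, hadj, ← Matrix.adjugate_fin_two_of]
    congr 1
    exact Matrix.eta_fin_two _
  have h11 : A.1 1 1 = (starRingEnd ℂ) (A.1 0 0) := by
    have := congrFun (congrFun key 0) 0
    simp [Matrix.star_apply] at this
    exact this.symm
  have h10 : A.1 1 0 = -(starRingEnd ℂ) (A.1 0 1) := by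
    have := congrFun (congrFun key 0) 1
    simp [Matrix.star_apply] at this
    have h2 := congrArg (starRingEnd ℂ) this
    simpa using h2
  have hnorm : A.1 0 0 * star (A.1 0 0) + A.1 0 1 * star (A.1 0 1) = 1 := by
    have := congrFun (congrFun hU 0) 0
    simpa [Matrix.mul_apply, Fin.sum_univ_two, Matrix.star_apply, Matrix.one_apply] using this
  refine ⟨(A.1 0 0).re, (A.1 0 0).im, (A.1 0 1).re, (A.1 0 1).im, ?_, ?_⟩
  · have := congrArg Complex.re hnorm
    simp [Complex.mul_re] at this
    nlinarith [this]
  · ext i j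
    fin_cases i <;> fin_cases j <;>
      simp [Qm, Complex.ext_iff, h11, h10]

lemma rot_of_eq {A : Matrix (Fin 2) (Fin 2) ℂ} {w x y z : ℝ} (hA : A = Qm w x y z) :
    rot (A 0 0).re (A 0 0).im (A 0 1).re (A 0 1).im = rot w x y z := by
  subst hA; rfl

/-- The double cover homomorphism `SU(2) →* SO(3)`. -/
def phi : SU2 →* SO3 where
  toFun A := ⟨rot (A.1 0 0).re (A.1 0 0).im (A.1 0 1).re (A.1 0 1).im, by
    obtain ⟨w, x, y, z, hn, hA⟩ := su2_repr A
    rw [rot_of_eq hA]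
    exact rot_mem hn⟩
  map_one' := by
    apply Subtype.ext
    show rot ((1 : Matrix (Fin 2) (Fin 2) ℂ) 0 0).re _ _ _ = (1 : Matrix (Fin 3) (Fin 3) ℝ)
    ext i j
    fin_cases i <;> fin_cases j <;>
      norm_num [rot, Matrix.one_apply, Fin.ext_iff]
  map_mul' A B := by
    apply Subtype.ext
    obtain ⟨w₁, x₁, y₁, z₁, hn₁, hA⟩ := su2_repr A
    obtain ⟨w₂, x₂, y₂, z₂, hn₂, hB⟩ := su2_repr B
    have hAB : (A * B).1 = Qm (w₁*w₂ - x₁*x₂ - y₁*y₂ - z₁*z₂) (w₁*x₂ + x₁*w₂ + y₁*z₂ - z₁*y₂)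
       (w₁*y₂ - x₁*z₂ + y₁*w₂ + z₁*x₂) (w₁*z₂ + x₁*y₂ - y₁*x₂ + z₁*w₂) := by
      show A.1 * B.1 = _
      rw [hA, hB, Qm_mul]
    show rot _ _ _ _ = rot _ _ _ _ * rot _ _ _ _
    rw [rot_of_eq hAB, rot_of_eq hA, rot_of_eq hB, rot_mul]

/-! ### Elementary rotations -/

def Rz (c s : ℝ) : Matrix (Fin 3) (Fin 3) ℝ := !![c, -s, 0; s, c, 0; 0, 0, 1]
def Ry (c s : ℝ) : Matrix (Fin 3) (Fin 3) ℝ := !![c, 0, s; 0, 1, 0; -s, 0, c]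

lemma Rz_mul_Rz (c s c' s' : ℝ) : Rz c s * Rz c' s' = Rz (c*c'-s*s') (s*c'+c*s') := by
  ext i j
  fin_cases i <;> fin_cases j <;>
    simp [Rz, Matrix.mul_apply, Fin.sum_univ_three] <;> ring

lemma Ry_mul_Ry (c s c' s' : ℝ) : Ry c s * Ry c' s' = Ry (c*c'-s*s') (s*c'+c*s') := by
  ext i j
  fin_cases i <;> fin_cases j <;>
    simp [Ry, Matrix.mul_apply, Fin.sum_univ_three] <;> ring

lemma Rz_one : Rz 1 0 = 1 := by
  ext i j
  fin_cases i <;> fin_cases j <;>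
    simp [Rz, Matrix.one_apply, Fin.ext_iff, Matrix.vecHead, Matrix.vecTail]

lemma Ry_one : Ry 1 0 = 1 := by
  ext i j
  fin_cases i <;> fin_cases j <;>
    simp [Ry, Matrix.one_apply, Fin.ext_iff, Matrix.vecHead, Matrix.vecTail]

lemma Rz_cancel {c s : ℝ} (h : c^2+s^2 = 1) : Rz c (-s) * Rz c s = 1 := by
  rw [Rz_mul_Rz]
  have h1 : c*c - -s*s = 1 := by nlinarith
  have h2 : -s*c + c*s = 0 := by ring
  rw [h1, h2, Rz_one]

lemma Ry_cancel {c s : ℝ} (h : c^2+s^2 = 1) : Ry c s * Ry c (-s) = 1 := by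
  rw [Ry_mul_Ry]
  have h1 : c*c - s*(-s) = 1 := by nlinarith
  have h2 : s*c + c*(-s) = 0 := by ring
  rw [h1, h2, Ry_one]

lemma half_angle (c s : ℝ) (h : c^2+s^2 = 1) :
    ∃ C S : ℝ, C^2+S^2 = 1 ∧ C^2-S^2 = c ∧ 2*C*S = s := by
  by_cases hc : c = -1
  · have hs : s = 0 := by nlinarith
    exact ⟨0, 1, by norm_num, by norm_num [hc], by norm_num [hs]⟩
  · have hge : -1 ≤ c := by nlinarith [sq_nonneg s]
    have h1c : 0 < 1 + c := by
      rcases lt_or_eq_of_le hge with h' | h'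
      · linarith
      · exact absurd h'.symm hc
    set C := Real.sqrt ((1+c)/2) with hC
    have hC2 : C^2 = (1+c)/2 := Real.sq_sqrt (by linarith)
    have hCpos : 0 < C := Real.sqrt_pos.mpr (by linarith)
    refine ⟨C, s/(2*C), ?_, ?_, ?_⟩
    · field_simp
      nlinarith [hC2, h]
    · field_simp
      nlinarith [hC2, h]
    · field_simp

lemma block_lemma {P : Matrix (Fin 3) (Fin 3) ℝ}
    (h1 : star P * P = 1) (h2 : P * star P = 1) (hd : P.det = 1)
    (e02 : P 0 2 = 0) (e12 : P 1 2 = 0) (e22 : P 2 2 = 1) :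
    (P 0 0)^2 + (P 1 0)^2 = 1 ∧ P = Rz (P 0 0) (P 1 0) := by
  have hrow := congrFun (congrFun h2 2) 2
  simp [Matrix.mul_apply, Fin.sum_univ_three, Matrix.star_apply, Matrix.one_apply, e22] at hrow
  have h20 : P 2 0 = 0 := by nlinarith [sq_nonneg (P 2 0), sq_nonneg (P 2 1)]
  have h21 : P 2 1 = 0 := by nlinarith [sq_nonneg (P 2 0), sq_nonneg (P 2 1)]
  have hc0 := congrFun (congrFun h1 0) 0
  simp [Matrix.mul_apply, Fin.sum_univ_three, Matrix.star_apply, Matrix.one_apply, h20] at hc0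
  have hc01 := congrFun (congrFun h1 0) 1
  simp [Matrix.mul_apply, Fin.sum_univ_three, Matrix.star_apply, Matrix.one_apply, h20, h21] at hc01
  rw [Matrix.det_fin_three, e02, e12, e22, h20, h21] at hd
  ring_nf at hd
  have hnorm : (P 0 0)^2 + (P 1 0)^2 = 1 := by nlinarith [hc0]
  have hda : P 1 1 = P 0 0 := by
    linear_combination P 0 0 * hd + P 1 0 * hc01 - P 1 1 * hc0
  have hcb : P 0 1 = -(P 1 0) := by
    linear_combination P 0 0 * hc01 - P 1 0 * hd - P 0 1 * hc0
  refine ⟨hnorm, ?_⟩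
  ext i j
  fin_cases i <;> fin_cases j <;>
    simp [Rz, e02, e12, e22, h20, h21, hda, hcb]

lemma Rz_mem {c s : ℝ} (h : c^2+s^2 = 1) :
    Rz c s ∈ Matrix.specialOrthogonalGroup (Fin 3) ℝ := by
  rw [Matrix.mem_specialOrthogonalGroup_iff]
  constructor
  · rw [Matrix.mem_orthogonalGroup_iff]
    ext i j
    fin_cases i <;> fin_cases j <;>
      simp [Rz, Matrix.mul_apply, Fin.sum_univ_three, Matrix.star_eq_conjTranspose,
        Matrix.conjTranspose_apply, Matrix.transpose_apply, Matrix.vecHead, Matrix.vecTail,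
        Matrix.one_apply] <;>
      first
      | ring1
      | nlinarith [h]
  · show Matrix.det _ = 1
    rw [Matrix.det_fin_three]
    simp [Rz, Matrix.vecHead, Matrix.vecTail]
    nlinarith [h]

lemma Ry_mem {c s : ℝ} (h : c^2+s^2 = 1) :
    Ry c s ∈ Matrix.specialOrthogonalGroup (Fin 3) ℝ := by
  rw [Matrix.mem_specialOrthogonalGroup_iff]
  constructor
  · rw [Matrix.mem_orthogonalGroup_iff]
    ext i j
    fin_cases i <;> fin_cases j <;>
      simp [Ry, Matrix.mul_apply, Fin.sum_univ_three, Matrix.star_eq_conjTranspose,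
        Matrix.conjTranspose_apply, Matrix.transpose_apply, Matrix.vecHead, Matrix.vecTail,
        Matrix.one_apply] <;>
      first
      | ring1
      | nlinarith [h]
  · show Matrix.det _ = 1
    rw [Matrix.det_fin_three]
    simp [Ry, Matrix.vecHead, Matrix.vecTail]
    nlinarith [h]

set_option maxHeartbeats 1000000 in
lemma so3_decomp {M : Matrix (Fin 3) (Fin 3) ℝ}
    (hmem : M ∈ Matrix.specialOrthogonalGroup (Fin 3) ℝ) :
    ∃ c₁ s₁ c₂ s₂ c₃ s₃ : ℝ, c₁^2+s₁^2 = 1 ∧ c₂^2+s₂^2 = 1 ∧ c₃^2+s₃^2 = 1 ∧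
      M = Rz c₁ s₁ * (Ry c₂ s₂ * Rz c₃ s₃) := by
  have hsM : star M * M = 1 := hmem.1.1
  set p := M 0 2 with hp
  set q := M 1 2 with hq
  set t := M 2 2 with ht
  set r := Real.sqrt (p^2 + q^2) with hr
  have hr2 : r^2 = p^2 + q^2 := Real.sq_sqrt (by positivity)
  have hcol := congrFun (congrFun hsM 2) 2
  simp [Matrix.mul_apply, Fin.sum_univ_three, Matrix.star_apply, Matrix.one_apply,
    ← hp, ← hq, ← ht] at hcol
  have hrt : r^2 + t^2 = 1 := by rw [hr2]; nlinarith [hcol]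
  obtain ⟨c₁, s₁, h1, hc1p, hc1q⟩ :
      ∃ c₁ s₁ : ℝ, c₁^2+s₁^2 = 1 ∧ c₁ * p - s₁ * q = r ∧ s₁ * p + c₁ * q = 0 := by
    by_cases h0 : r = 0
    · have hpq : p = 0 ∧ q = 0 := by
        constructor <;> nlinarith [hr2, h0, sq_nonneg p, sq_nonneg q]
      exact ⟨1, 0, by norm_num, by rw [hpq.1, hpq.2, h0]; ring, by rw [hpq.1, hpq.2]; ring⟩
    · refine ⟨p/r, -(q/r), ?_, ?_, ?_⟩
      · field_simp
        linarith [hr2]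
      · field_simp
        linarith [hr2]
      · field_simp
        ring
  obtain ⟨N₁, hN₁⟩ : ∃ N, N = Rz c₁ s₁ * M := ⟨_, rfl⟩
  have hN1 : N₁ 0 2 = r := by
    rw [hN₁]
    simp [Rz, Matrix.mul_apply, Fin.sum_univ_three, ← hp, ← hq]
    linarith [hc1p]
  have hN1' : N₁ 1 2 = 0 := by
    rw [hN₁]
    simp [Rz, Matrix.mul_apply, Fin.sum_univ_three, ← hp, ← hq]
    linarith [hc1q]
  have hN1'' : N₁ 2 2 = t := by
    rw [hN₁]
    simp [Rz, Matrix.mul_apply, Fin.sum_univ_three, ← ht]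
  obtain ⟨N₂, hN₂⟩ : ∃ N, N = Ry t (-r) * N₁ := ⟨_, rfl⟩
  have hN₂mem : N₂ ∈ Matrix.specialOrthogonalGroup (Fin 3) ℝ := by
    rw [hN₂, hN₁]
    exact mul_mem (Ry_mem (by nlinarith [hrt])) (mul_mem (Rz_mem h1) hmem)
  have e02 : N₂ 0 2 = 0 := by
    rw [hN₂]
    simp [Ry, Matrix.mul_apply, Fin.sum_univ_three, hN1, hN1', hN1'']
    ring
  have e12 : N₂ 1 2 = 0 := by
    rw [hN₂]
    simp [Ry, Matrix.mul_apply, Fin.sum_univ_three, hN1, hN1', hN1'']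
  have e22 : N₂ 2 2 = 1 := by
    rw [hN₂]
    simp [Ry, Matrix.mul_apply, Fin.sum_univ_three, hN1, hN1', hN1'']
    nlinarith [hrt]
  obtain ⟨hab, hPeq⟩ := block_lemma hN₂mem.1.1 hN₂mem.1.2 hN₂mem.2 e02 e12 e22
  refine ⟨c₁, -s₁, t, r, N₂ 0 0, N₂ 1 0, by nlinarith [h1], by nlinarith [hrt], hab, ?_⟩
  have key : Rz c₁ (-s₁) * (Ry t r * N₂) = M := by
    rw [hN₂, hN₁, ← mul_assoc (Ry t r), Ry_cancel (by nlinarith [hrt]), one_mul, ← mul_assoc,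
      Rz_cancel h1, one_mul]
  rw [← key, ← hPeq]

lemma rot_Rz {C S c s : ℝ} (h1 : C^2-S^2 = c) (h2 : 2*C*S = s) (h3 : C^2+S^2 = 1) :
    rot C 0 0 S = Rz c s := by
  ext i j
  fin_cases i <;> fin_cases j <;>
    simp [rot, Rz] <;> ring_nf <;>
    first
    | ring1
    | linarith [h1, h2, h3]
    | nlinarith [h1, h2, h3]

lemma rot_Ry {C S c s : ℝ} (h1 : C^2-S^2 = c) (h2 : 2*C*S = s) (h3 : C^2+S^2 = 1) :
    rot C 0 S 0 = Ry c s := by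
  ext i j
  fin_cases i <;> fin_cases j <;>
    simp [rot, Ry] <;> ring_nf <;>
    first
    | ring1
    | linarith [h1, h2, h3]
    | nlinarith [h1, h2, h3]

lemma exists_phi_Rz {c s : ℝ} (h : c^2+s^2 = 1) : ∃ A : SU2, (phi A).1 = Rz c s := by
  obtain ⟨C, S, h3, h1, h2⟩ := half_angle c s h
  refine ⟨⟨Qm C 0 0 S, Qm_mem (by nlinarith [h3])⟩, ?_⟩
  calc (phi ⟨Qm C 0 0 S, Qm_mem (by nlinarith [h3])⟩).1
      = rot C 0 0 S := rot_of_eq rfl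
    _ = Rz c s := rot_Rz h1 h2 h3

lemma exists_phi_Ry {c s : ℝ} (h : c^2+s^2 = 1) : ∃ A : SU2, (phi A).1 = Ry c s := by
  obtain ⟨C, S, h3, h1, h2⟩ := half_angle c s h
  refine ⟨⟨Qm C 0 S 0, Qm_mem (by nlinarith [h3])⟩, ?_⟩
  calc (phi ⟨Qm C 0 S 0, Qm_mem (by nlinarith [h3])⟩).1
      = rot C 0 S 0 := rot_of_eq rfl
    _ = Ry c s := rot_Ry h1 h2 h3

lemma phi_surj : Function.Surjective phi := by
  intro B
  obtain ⟨c₁, s₁, c₂, s₂, c₃, s₃, h1, h2, h3, hB⟩ := so3_decomp B.2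
  obtain ⟨A₁, hA₁⟩ := exists_phi_Rz h1
  obtain ⟨A₂, hA₂⟩ := exists_phi_Ry h2
  obtain ⟨A₃, hA₃⟩ := exists_phi_Rz h3
  refine ⟨A₁ * (A₂ * A₃), ?_⟩
  apply Subtype.ext
  rw [phi.map_mul, phi.map_mul]
  show (phi A₁).1 * ((phi A₂).1 * (phi A₃).1) = B.1
  rw [hA₁, hA₂, hA₃, ← hB]

lemma Qm_one : Qm 1 0 0 0 = 1 := by
  ext i j
  fin_cases i <;> fin_cases j <;>
    simp [Qm, Matrix.one_apply, Fin.ext_iff, Complex.ext_iff, Matrix.vecHead, Matrix.vecTail]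

lemma Qm_negOne : Qm (-1) 0 0 0 = negOne.1 := by
  ext i j
  fin_cases i <;> fin_cases j <;>
    simp [Qm, negOne, Complex.ext_iff, Matrix.vecHead, Matrix.vecTail]

lemma rot_negOne : rot (-1) 0 0 0 = 1 := by
  ext i j
  fin_cases i <;> fin_cases j <;>
    norm_num [rot, Matrix.one_apply, Fin.ext_iff]

lemma phi_ker_eq : (phi.ker : Set SU2) = {1, negOne} := by
  ext A
  simp only [Set.mem_insert_iff, Set.mem_singleton_iff, SetLike.mem_coe, MonoidHom.mem_ker]
  constructor
  · intro hA
    obtain ⟨w, x, y, z, hn, hQ⟩ := su2_repr A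
    have h1 : rot w x y z = (1 : Matrix (Fin 3) (Fin 3) ℝ) := by
      rw [← rot_of_eq hQ]
      exact congrArg Subtype.val hA
    have d0 := congrFun (congrFun h1 0) 0
    have d1 := congrFun (congrFun h1 1) 1
    simp [rot, Matrix.one_apply] at d0 d1
    have hz : z = 0 := by nlinarith [sq_nonneg z, sq_nonneg y, sq_nonneg x]
    have hy : y = 0 := by nlinarith [sq_nonneg z, sq_nonneg y, sq_nonneg x]
    have hx : x = 0 := by nlinarith [sq_nonneg z, sq_nonneg y, sq_nonneg x]
    have hw : (w - 1) * (w + 1) = 0 := by nlinarith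
    rcases mul_eq_zero.mp hw with hw1 | hw1
    · left
      apply Subtype.ext
      rw [hQ, hx, hy, hz]
      have : w = 1 := by linarith
      rw [this, Qm_one]
      rfl
    · right
      apply Subtype.ext
      rw [hQ, hx, hy, hz]
      have : w = -1 := by linarith
      rw [this, Qm_negOne]
  · rintro (rfl | rfl)
    · exact map_one phi
    · apply Subtype.ext
      show rot (negOne.1 0 0).re (negOne.1 0 0).im (negOne.1 0 1).re (negOne.1 0 1).im
          = (1 : Matrix (Fin 3) (Fin 3) ℝ)
      rw [rot_of_eq Qm_negOne.symm, rot_negOne]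

lemma Qm_inj_of_eq {a b c d a' b' c' d' : ℝ} (h : Qm a b c d = Qm a' b' c' d') :
    a = a' ∧ b = b' ∧ c = c' ∧ d = d' := by
  have h1 := congrFun (congrFun h 0) 0
  have h2 := congrFun (congrFun h 0) 1
  simp [Qm, Complex.ext_iff] at h1 h2
  exact ⟨h1.1, h1.2, h2.1, h2.2⟩

lemma center_eq : Subgroup.center SU2 = phi.ker := by
  apply le_antisymm
  · intro A hA
    rw [Subgroup.mem_center_iff] at hA
    obtain ⟨w, x, y, z, hn, hQ⟩ := su2_repr A
    have hU := hA ⟨Qm 0 1 0 0, Qm_mem (by norm_num)⟩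
    have hV := hA ⟨Qm 0 0 1 0, Qm_mem (by norm_num)⟩
    have hU' := congrArg Subtype.val hU
    have hV' := congrArg Subtype.val hV
    simp only [Submonoid.coe_mul] at hU' hV'
    rw [hQ] at hU' hV'
    rw [Qm_mul, Qm_mul] at hU' hV'
    obtain ⟨_, _, ey, ez⟩ := Qm_inj_of_eq hU'
    obtain ⟨_, ex, _, _⟩ := Qm_inj_of_eq hV'
    have hy : y = 0 := by linarith [ey]
    have hz : z = 0 := by linarith [ez]
    have hx : x = 0 := by linarith [ex]
    rw [← SetLike.mem_coe, phi_ker_eq]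
    have hw : (w - 1) * (w + 1) = 0 := by nlinarith
    rcases mul_eq_zero.mp hw with hw1 | hw1
    · left
      apply Subtype.ext
      rw [hQ, hx, hy, hz]
      have : w = 1 := by linarith
      rw [this, Qm_one]
      rfl
    · right
      apply Subtype.ext
      rw [hQ, hx, hy, hz]
      have : w = -1 := by linarith
      rw [this, Qm_negOne]
  · intro A hA
    have : A ∈ ({1, negOne} : Set SU2) := by rw [← phi_ker_eq]; exact hA
    have hneg : negOne ∈ Subgroup.center SU2 := by
      rw [Subgroup.mem_center_iff]
      intro g
      apply Subtype.ext
      show g.1 * negOne.1 = negOne.1 * g.1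
      have hval : negOne.1 = -(1 : Matrix (Fin 2) (Fin 2) ℂ) := by
        ext i j
        fin_cases i <;> fin_cases j <;>
          simp [negOne, Matrix.one_apply, Fin.ext_iff, Matrix.vecHead, Matrix.vecTail]
      rw [hval, mul_neg, mul_one, neg_mul, one_mul]
    rcases this with rfl | rfl
    · exact Subgroup.one_mem _
    · exact hneg

/-- There is a surjective group homomorphism `SU(2) → SO(3)` whose kernel is `{1, -1}`;
in other words, `SO(3)` is isomorphic to the quotient of `SU(2)` by its center. -/
theorem su2_double_cover_so3 :
    ∃ φ : SU2 →* SO3, Function.Surjective φ ∧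
      ((φ.ker : Set SU2) = {1, negOne}) ∧
      Nonempty (SO3 ≃* (SU2 ⧸ Subgroup.center SU2)) := by
  refine ⟨phi, phi_surj, phi_ker_eq, ?_⟩
  exact ⟨((QuotientGroup.quotientKerEquivOfSurjective phi phi_surj).symm.trans
    (QuotientGroup.quotientMulEquivOfEq center_eq.symm))⟩
end
end
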